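/- arXiv:2102.08850 — 4 statements merged into one kernel-verified Lean document; each statement's English description precedes it below -/
import Mathlib

section
/- Suppose 1 ≤ α < ∞ and α ≠ 2. An n × n real matrix A is an isometry of the L^α norm on ℝ^n (i.e., ‖Ax‖_α = ‖x‖_α for all x ∈ ℝ^n) if and only if A is a generalized permutation matrix, meaning there exist a permutation σ of {1,…,n} and signs α_i ∈ {−1, +1} such that (Az)_i = α_i z_{σ(i)} for all z and i. -/
open Real Finset

private lemma pm2' {p x y : ℝ} (hp : 1 ≤ p) (hx : 0 ≤ x) (hy : 0 ≤ y) :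
    (x + y) ^ p ≤ 2 ^ (p - 1) * (x ^ p + y ^ p) := by
  have h := NNReal.rpow_add_le_mul_rpow_add_rpow x.toNNReal y.toNNReal hp
  have h2 := NNReal.coe_le_coe.2 h
  push_cast at h2
  rwa [Real.coe_toNNReal x hx, Real.coe_toNNReal y hy] at h2

private lemma super' {p x y : ℝ} (hp : 1 ≤ p) (hx : 0 ≤ x) (hy : 0 ≤ y) :
    x ^ p + y ^ p ≤ (x + y) ^ p := by
  have h := NNReal.add_rpow_le_rpow_add x.toNNReal y.toNNReal hp
  have h2 := NNReal.coe_le_coe.2 h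
  push_cast at h2
  rwa [Real.coe_toNNReal x hx, Real.coe_toNNReal y hy] at h2

private lemma sub' {p x y : ℝ} (hp0 : 0 ≤ p) (hp : p ≤ 1) (hx : 0 ≤ x) (hy : 0 ≤ y) :
    (x + y) ^ p ≤ x ^ p + y ^ p := by
  have h := NNReal.rpow_add_le_add_rpow x.toNNReal y.toNNReal hp0 hp
  have h2 := NNReal.coe_le_coe.2 h
  push_cast at h2
  rwa [Real.coe_toNNReal x hx, Real.coe_toNNReal y hy] at h2

private lemma pm1' {q x y : ℝ} (hq0 : 0 < q) (hq1 : q ≤ 1) (hx : 0 ≤ x) (hy : 0 ≤ y) :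
    x ^ q + y ^ q ≤ 2 ^ (1 - q) * (x + y) ^ q := by
  have hp : 1 ≤ 1 / q := (one_le_div hq0).2 hq1
  have h := pm2' (x := x ^ q) (y := y ^ q) hp (Real.rpow_nonneg hx q) (Real.rpow_nonneg hy q)
  rw [← Real.rpow_mul hx, ← Real.rpow_mul hy, mul_one_div, div_self hq0.ne',
    Real.rpow_one, Real.rpow_one] at h
  have h2 := Real.rpow_le_rpow (Real.rpow_nonneg (by positivity) _) h hq0.le
  rw [← Real.rpow_mul (by positivity), one_div, inv_mul_cancel₀ hq0.ne', Real.rpow_one,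
    Real.mul_rpow (by positivity) (by positivity), ← Real.rpow_mul (by norm_num)] at h2
  have e : (q⁻¹ - 1) * q = 1 - q := by field_simp
  rwa [e] at h2

private lemma strict_sub {q x y : ℝ} (hq0 : 0 < q) (hq1 : q < 1) (hx : 0 < x) (hy : 0 < y) :
    (x + y) ^ q < x ^ q + y ^ q := by
  have h1 : (x + y) ^ (q - 1) < x ^ (q - 1) :=
    Real.rpow_lt_rpow_of_neg hx (lt_add_of_pos_right x hy) (by linarith)
  have h2 : (x + y) ^ (q - 1) < y ^ (q - 1) :=
    Real.rpow_lt_rpow_of_neg hy (lt_add_of_pos_left y hx) (by linarith)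
  have e : ∀ z : ℝ, 0 < z → z ^ q = z * z ^ (q - 1) := by
    intro z hz
    rw [show q = 1 + (q - 1) by ring, Real.rpow_add hz, Real.rpow_one]
    ring_nf
  rw [e _ hx, e _ hy, e _ (by linarith)]
  calc (x + y) * (x + y) ^ (q - 1) = x * (x + y) ^ (q - 1) + y * (x + y) ^ (q - 1) := by ring
    _ < x * x ^ (q - 1) + y * y ^ (q - 1) := by
        exact add_lt_add (mul_lt_mul_of_pos_left h1 hx) (mul_lt_mul_of_pos_left h2 hy)

private lemma strict_super {q x y : ℝ} (hq1 : 1 < q) (hx : 0 < x) (hy : 0 < y) :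
    x ^ q + y ^ q < (x + y) ^ q := by
  have h1 : x ^ (q - 1) < (x + y) ^ (q - 1) :=
    Real.rpow_lt_rpow hx.le (lt_add_of_pos_right x hy) (by linarith)
  have h2 : y ^ (q - 1) < (x + y) ^ (q - 1) :=
    Real.rpow_lt_rpow hy.le (lt_add_of_pos_left y hx) (by linarith)
  have e : ∀ z : ℝ, 0 < z → z ^ q = z * z ^ (q - 1) := by
    intro z hz
    rw [show q = 1 + (q - 1) by ring, Real.rpow_add hz, Real.rpow_one]
    ring_nf
  rw [e _ hx, e _ hy, e _ (by linarith)]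
  calc x * x ^ (q - 1) + y * y ^ (q - 1)
      < x * (x + y) ^ (q - 1) + y * (x + y) ^ (q - 1) := by
        exact add_lt_add (mul_lt_mul_of_pos_left h1 hx) (mul_lt_mul_of_pos_left h2 hy)
    _ = (x + y) * (x + y) ^ (q - 1) := by ring

private lemma key_lt {α a b : ℝ} (hα0 : 0 < α) (hα2 : α < 2) :
    |a + b| ^ α + |a - b| ^ α ≤ 2 * |a| ^ α + 2 * |b| ^ α ∧
    (|a + b| ^ α + |a - b| ^ α = 2 * |a| ^ α + 2 * |b| ^ α → a * b = 0) := by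
  set q := α / 2 with hqdef
  have hq0 : 0 < q := by positivity
  have hq1 : q < 1 := by rw [hqdef]; linarith
  have asq : ∀ x : ℝ, |x| ^ α = (x ^ 2) ^ q := by
    intro x
    rw [← sq_abs, ← Real.rpow_natCast_mul (abs_nonneg x) 2 q]
    congr 1
    push_cast
    rw [hqdef]; ring
  have main1 : ((a + b) ^ 2) ^ q + ((a - b) ^ 2) ^ q ≤ 2 * (a ^ 2 + b ^ 2) ^ q := by
    have h := pm1' hq0 hq1.le (sq_nonneg (a + b)) (sq_nonneg (a - b))
    rw [show (a + b) ^ 2 + (a - b) ^ 2 = 2 * (a ^ 2 + b ^ 2) by ring] at h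
    calc ((a + b) ^ 2) ^ q + ((a - b) ^ 2) ^ q ≤ 2 ^ (1 - q) * (2 * (a ^ 2 + b ^ 2)) ^ q := h
      _ = 2 * (a ^ 2 + b ^ 2) ^ q := by
          rw [Real.mul_rpow (by norm_num) (by positivity), ← mul_assoc,
            ← Real.rpow_add (by norm_num : (0:ℝ) < 2),
            show (1 - q) + q = 1 by ring, Real.rpow_one]
  have main2 : (a ^ 2 + b ^ 2) ^ q ≤ (a ^ 2) ^ q + (b ^ 2) ^ q :=
    sub' hq0.le hq1.le (sq_nonneg a) (sq_nonneg b)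
  constructor
  · rw [asq (a + b), asq (a - b), asq a, asq b]
    linarith
  · intro heq
    by_contra hab
    obtain ⟨ha, hb⟩ := mul_ne_zero_iff.1 hab
    have h3 : (a ^ 2 + b ^ 2) ^ q < (a ^ 2) ^ q + (b ^ 2) ^ q :=
      strict_sub hq0 hq1 (by positivity) (by positivity)
    rw [asq (a + b), asq (a - b), asq a, asq b] at heq
    linarith

private lemma key_gt {α a b : ℝ} (hα0 : 0 < α) (hα2 : 2 < α) :
    2 * |a| ^ α + 2 * |b| ^ α ≤ |a + b| ^ α + |a - b| ^ α ∧
    (|a + b| ^ α + |a - b| ^ α = 2 * |a| ^ α + 2 * |b| ^ α → a * b = 0) := by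
  set q := α / 2 with hqdef
  have hq0 : 0 < q := by positivity
  have hq1 : 1 < q := by rw [hqdef]; linarith
  have asq : ∀ x : ℝ, |x| ^ α = (x ^ 2) ^ q := by
    intro x
    rw [← sq_abs, ← Real.rpow_natCast_mul (abs_nonneg x) 2 q]
    congr 1
    push_cast
    rw [hqdef]; ring
  have main1 : 2 * (a ^ 2 + b ^ 2) ^ q ≤ ((a + b) ^ 2) ^ q + ((a - b) ^ 2) ^ q := by
    have h := pm2' (x := (a + b) ^ 2) (y := (a - b) ^ 2) hq1.le (sq_nonneg _) (sq_nonneg _)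
    rw [show (a + b) ^ 2 + (a - b) ^ 2 = 2 * (a ^ 2 + b ^ 2) by ring,
      Real.mul_rpow (by norm_num) (by positivity)] at h
    have heq2 : (2:ℝ) ^ q = 2 * 2 ^ (q - 1) := by
      have h0 : (2:ℝ) ^ ((1:ℝ) + (q - 1)) = 2 ^ (1:ℝ) * 2 ^ (q - 1) :=
        Real.rpow_add (by norm_num) _ _
      rw [show (1:ℝ) + (q - 1) = q by ring, Real.rpow_one] at h0
      exact h0
    rw [heq2] at h
    have hpos : (0:ℝ) < 2 ^ (q - 1) := Real.rpow_pos_of_pos (by norm_num) _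
    nlinarith [h, hpos]
  have main2 : (a ^ 2) ^ q + (b ^ 2) ^ q ≤ (a ^ 2 + b ^ 2) ^ q :=
    super' hq1.le (sq_nonneg a) (sq_nonneg b)
  constructor
  · rw [asq (a + b), asq (a - b), asq a, asq b]
    linarith
  · intro heq
    by_contra hab
    obtain ⟨ha, hb⟩ := mul_ne_zero_iff.1 hab
    have h3 : (a ^ 2) ^ q + (b ^ 2) ^ q < (a ^ 2 + b ^ 2) ^ q :=
      strict_super hq1 (by positivity) (by positivity)
    rw [asq (a + b), asq (a - b), asq a, asq b] at heq
    linarith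

/-- an n×n matrix is an isometry of the L^α norm (1 ≤ α < ∞, α ≠ 2)
iff it is a generalized permutation matrix. -/
theorem stmt_3 (n : ℕ) (α : ℝ) (hα : 1 ≤ α) (hα2 : α ≠ 2)
    (A : Matrix (Fin n) (Fin n) ℝ) :
    (∀ x : Fin n → ℝ,
        (∑ i, |A.mulVec x i| ^ α) ^ (1 / α) = (∑ i, |x i| ^ α) ^ (1 / α))
    ↔ ∃ (σ : Equiv.Perm (Fin n)) (ε : Fin n → ℝ),
        (∀ i, ε i = 1 ∨ ε i = -1) ∧
        ∀ (z : Fin n → ℝ) (i : Fin n), A.mulVec z i = ε i * z (σ i) := by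
  have hα0 : (0:ℝ) < α := lt_of_lt_of_le one_pos hα
  constructor
  · intro hiso
    have hsum : ∀ x : Fin n → ℝ, ∑ i, |A.mulVec x i| ^ α = ∑ i, |x i| ^ α := by
      intro x
      have hS : (0:ℝ) ≤ ∑ i, |A.mulVec x i| ^ α :=
        Finset.sum_nonneg fun i _ => Real.rpow_nonneg (abs_nonneg _) _
      have hT : (0:ℝ) ≤ ∑ i, |x i| ^ α :=
        Finset.sum_nonneg fun i _ => Real.rpow_nonneg (abs_nonneg _) _
      have h := congrArg (fun t : ℝ => t ^ α) (hiso x)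
      simp only [one_div] at h
      rwa [Real.rpow_inv_rpow hS hα0.ne', Real.rpow_inv_rpow hT hα0.ne'] at h
    have ssum : ∀ (j : Fin n) (c : ℝ), ∑ m, |Pi.single j c m| ^ α = |c| ^ α := by
      intro j c
      rw [Finset.sum_eq_single j]
      · rw [Pi.single_eq_same]
      · intro m _ hm
        rw [Pi.single_eq_of_ne hm, abs_zero, Real.zero_rpow hα0.ne']
      · intro h; exact absurd (Finset.mem_univ j) h
    have col : ∀ j, ∑ i, |A i j| ^ α = 1 := by
      intro j
      have h := hsum (Pi.single j 1)
      simp only [Matrix.mulVec_single, Pi.smul_apply, Matrix.col_apply, op_smul_eq_mul, mul_one] at h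
      rw [ssum j 1, abs_one, Real.one_rpow] at h
      exact h
    have cross : ∀ (j k : Fin n), j ≠ k → ∀ s : ℝ, |s| = 1 →
        ∑ i, |A i j + A i k * s| ^ α = 2 := by
      intro j k hjk s hs
      have h := hsum (Pi.single j 1 + Pi.single k s)
      rw [Matrix.mulVec_add] at h
      simp only [Matrix.mulVec_single, Pi.add_apply, Pi.smul_apply, Matrix.col_apply, op_smul_eq_mul, mul_one] at h
      have e1 : ∀ m, |(Pi.single j 1 : Fin n → ℝ) m + (Pi.single k s : Fin n → ℝ) m| ^ α
          = |(Pi.single j 1 : Fin n → ℝ) m| ^ α + |(Pi.single k s : Fin n → ℝ) m| ^ α := by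
        intro m
        rcases eq_or_ne m j with rfl | hmj
        · rw [Pi.single_eq_same, Pi.single_eq_of_ne hjk]
          simp [Real.zero_rpow hα0.ne']
        · rcases eq_or_ne m k with rfl | hmk
          · rw [Pi.single_eq_same, Pi.single_eq_of_ne hmj]
            simp [Real.zero_rpow hα0.ne']
          · rw [Pi.single_eq_of_ne hmj, Pi.single_eq_of_ne hmk]
            simp [Real.zero_rpow hα0.ne']
      have hsum2 : ∑ m, |(Pi.single j 1 : Fin n → ℝ) m + (Pi.single k s : Fin n → ℝ) m| ^ α = 2 := by
        calc ∑ m, |(Pi.single j 1 : Fin n → ℝ) m + (Pi.single k s : Fin n → ℝ) m| ^ α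
            = ∑ m, (|(Pi.single j 1 : Fin n → ℝ) m| ^ α + |(Pi.single k s : Fin n → ℝ) m| ^ α) :=
              Finset.sum_congr rfl fun m _ => e1 m
          _ = 2 := by
              rw [Finset.sum_add_distrib, ssum j 1, ssum k s, abs_one, Real.one_rpow,
                hs, Real.one_rpow]
              norm_num
      exact h.trans hsum2
    have horth : ∀ (i : Fin n) (j k : Fin n), j ≠ k → A i j * A i k = 0 := by
      intro i j k hjk
      have hc1 := cross j k hjk 1 (by norm_num)
      have hc2 := cross j k hjk (-1) (by norm_num)
      simp only [mul_one] at hc1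
      have hc2' : ∑ i, |A i j - A i k| ^ α = 2 := by
        rw [← hc2]
        exact Finset.sum_congr rfl fun i _ => by rw [mul_neg_one, ← sub_eq_add_neg]
      have hL : ∑ i, (|A i j + A i k| ^ α + |A i j - A i k| ^ α) = 4 := by
        rw [Finset.sum_add_distrib, hc1, hc2']; norm_num
      have hR : ∑ i, (2 * |A i j| ^ α + 2 * |A i k| ^ α) = 4 := by
        rw [Finset.sum_add_distrib, ← Finset.mul_sum, ← Finset.mul_sum, col j, col k]
        norm_num
      rcases lt_or_gt_of_ne hα2 with hlt | hgt
      · have hterm := (Finset.sum_eq_sum_iff_of_le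
            (fun i _ => (key_lt (a := A i j) (b := A i k) hα0 hlt).1)).1
            (hL.trans hR.symm) i (Finset.mem_univ i)
        exact (key_lt hα0 hlt).2 hterm
      · have hterm := (Finset.sum_eq_sum_iff_of_le
            (fun i _ => (key_gt (a := A i j) (b := A i k) hα0 hgt).1)).1
            (hR.trans hL.symm) i (Finset.mem_univ i)
        exact (key_gt hα0 hgt).2 hterm.symm
    have hex : ∀ j, ∃ i, A i j ≠ 0 := by
      intro j
      by_contra h
      push_neg at h
      have hc := col j
      simp [h, Real.zero_rpow hα0.ne'] at hc
    choose r hr using hex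
    have hrinj : Function.Injective r := by
      intro j k hjk'
      by_contra hne
      exact mul_ne_zero (hr j) (by rw [hjk']; exact hr k) (horth (r j) j k hne)
    have hrbij : Function.Bijective r := Finite.injective_iff_bijective.1 hrinj
    let e := Equiv.ofBijective r hrbij
    have hA0 : ∀ i j, j ≠ e.symm i → A i j = 0 := by
      intro i j hne
      have h1 : A i (e.symm i) ≠ 0 := by
        have h2 := hr (e.symm i)
        rwa [show r (e.symm i) = i from e.apply_symm_apply i] at h2
      rcases mul_eq_zero.1 (horth i j (e.symm i) hne) with h | h
      · exact h
      · exact absurd h h1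
    refine ⟨e.symm, fun i => A i (e.symm i), ?_, ?_⟩
    · intro i
      have h1 : |A i (e.symm i)| ^ α = 1 := by
        have hc := col (e.symm i)
        rw [Finset.sum_eq_single i] at hc
        · exact hc
        · intro i' _ hi'
          have : A i' (e.symm i) = 0 := by
            apply hA0
            intro hcontra
            exact hi' (e.symm.injective hcontra).symm
          rw [this, abs_zero, Real.zero_rpow hα0.ne']
        · intro h; exact absurd (Finset.mem_univ i) h
      have habs : |A i (e.symm i)| = 1 := by
        have h2 := congrArg (fun t : ℝ => t ^ α⁻¹) h1
        simpa [Real.rpow_rpow_inv (abs_nonneg _) hα0.ne'] using h2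
      exact (abs_eq (by norm_num)).1 habs
    · intro z i
      have hmv : A.mulVec z i = ∑ j, A i j * z j := rfl
      rw [hmv, Finset.sum_eq_single (e.symm i)]
      · intro j _ hj
        rw [hA0 i j hj, zero_mul]
      · intro h; exact absurd (Finset.mem_univ _) h
  · rintro ⟨σ, ε, hε, hform⟩ x
    congr 1
    have hterm : ∀ i, |A.mulVec x i| ^ α = |x (σ i)| ^ α := by
      intro i
      rw [hform x i, abs_mul]
      rcases hε i with h | h <;> simp [h]
    rw [Finset.sum_congr rfl fun i _ => hterm i]
    exact Equiv.sum_comp σ fun i => |x i| ^ α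
end

section
/- Let Z be a convex body (a compact convex set with nonempty interior) in a normed vector space ℝ^N, and let h : Z → Z be a surjective isometry with respect to a norm-induced metric. Then h extends uniquely to an affine isometry of ℝ^N; in particular h is affine, i.e., h(z) = Az + b for some linear isometry A and vector b. -/
open Metric Set Bornology MeasureTheory Pointwise

namespace Mankiewicz

variable {E : Type*} [NormedAddCommGroup E] [NormedSpace ℝ E]

set_option linter.unusedSectionVars false
set_option linter.unusedVariables false

/-- Iterated metric midpoint sets inside `Z`. -/
def mseq (Z : Set E) (x y : E) : ℕ → Set E
  | 0 => {z | z ∈ Z ∧ dist z x ≤ dist x y / 2 ∧ dist z y ≤ dist x y / 2}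
  | n + 1 =>
    {z | z ∈ mseq Z x y n ∧ ∀ w ∈ mseq Z x y n, dist z w ≤ Metric.diam (mseq Z x y n) / 2}

lemma mseq_succ_subset (Z : Set E) (x y : E) (n : ℕ) :
    mseq Z x y (n + 1) ⊆ mseq Z x y n := fun _ hz => hz.1

lemma mseq_subset_zero (Z : Set E) (x y : E) : ∀ n, mseq Z x y n ⊆ mseq Z x y 0
  | 0 => subset_rfl
  | n + 1 => (mseq_succ_subset Z x y n).trans (mseq_subset_zero Z x y n)

lemma mseq_subset_Z (Z : Set E) (x y : E) (n : ℕ) : mseq Z x y n ⊆ Z :=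
  (mseq_subset_zero Z x y n).trans fun _ hz => hz.1

lemma mseq_subset_ball (Z : Set E) (x y : E) (n : ℕ) :
    mseq Z x y n ⊆ closedBall x (dist x y / 2) :=
  (mseq_subset_zero Z x y n).trans fun _ hz => hz.2.1

lemma mseq_bounded (Z : Set E) (x y : E) (n : ℕ) : IsBounded (mseq Z x y n) :=
  (isBounded_closedBall).subset (mseq_subset_ball Z x y n)

lemma mseq_diam (Z : Set E) (x y : E) : ∀ n, Metric.diam (mseq Z x y n) ≤ dist x y / 2 ^ n
  | 0 => by
    have h1 := (Metric.diam_mono (mseq_subset_ball Z x y 0) isBounded_closedBall).trans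
      (Metric.diam_closedBall (by positivity : (0:ℝ) ≤ dist x y / 2))
    simp only [pow_zero, div_one]; linarith
  | n + 1 => by
    have h1 : Metric.diam (mseq Z x y (n + 1)) ≤ Metric.diam (mseq Z x y n) / 2 := by
      apply Metric.diam_le_of_forall_dist_le (by positivity)
      intro a ha b hb
      exact ha.2 b hb.1
    calc Metric.diam (mseq Z x y (n + 1)) ≤ Metric.diam (mseq Z x y n) / 2 := h1
      _ ≤ dist x y / 2 ^ n / 2 := by linarith [mseq_diam Z x y n]
      _ = dist x y / 2 ^ (n + 1) := by ring

/-- If the midpoint ball around `x` is inside `Z`, the midpoint belongs to every `mseq`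
and each `mseq` is symmetric under the reflection `z ↦ x + y - z`. -/
lemma mseq_mid_mem (Z : Set E) (x y : E) (hb : closedBall x (dist x y / 2) ⊆ Z) :
    ∀ n, midpoint ℝ x y ∈ mseq Z x y n ∧ ∀ z ∈ mseq Z x y n, x + y - z ∈ mseq Z x y n := by
  have hrx : ∀ z : E, dist (x + y - z) x = dist z y := by
    intro z
    rw [dist_eq_norm, dist_eq_norm, ← norm_neg (z - y)]
    congr 1; abel
  have hry : ∀ z : E, dist (x + y - z) y = dist z x := by
    intro z
    rw [dist_eq_norm, dist_eq_norm, ← norm_neg (z - x)]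
    congr 1; abel
  have hmx : dist (midpoint ℝ x y) x = dist x y / 2 := by
    rw [dist_midpoint_left]; norm_num; ring
  have hmy : dist (midpoint ℝ x y) y = dist x y / 2 := by
    rw [dist_midpoint_right]; norm_num; ring
  intro n
  induction n with
  | zero =>
    refine ⟨⟨hb (by simp [mem_closedBall, hmx]), hmx.le, hmy.le⟩, ?_⟩
    rintro z ⟨_, hzx, hzy⟩
    exact ⟨hb (by simp [mem_closedBall, hrx z, hzy]), (hrx z).le.trans hzy,
      (hry z).le.trans hzx⟩
  | succ n ih =>
    obtain ⟨hm, hsym⟩ := ih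
    constructor
    · refine ⟨hm, fun w hw => ?_⟩
      have h1 : dist (x + y - w) w ≤ Metric.diam (mseq Z x y n) :=
        Metric.dist_le_diam_of_mem (mseq_bounded Z x y n) (hsym w hw) hw
      have h2 : dist (midpoint ℝ x y) w = dist (x + y - w) w / 2 := by
        rw [dist_eq_norm, dist_eq_norm]
        have hkey : midpoint ℝ x y - w = (2⁻¹ : ℝ) • (x + y - w - w) := by
          rw [midpoint_eq_smul_add]
          simp only [invOf_eq_inv]
          module
        rw [hkey, norm_smul]
        simp [Real.norm_eq_abs, abs_of_nonneg]
        ring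
      linarith
    · rintro z ⟨hz, hz2⟩
      refine ⟨hsym z hz, fun w hw => ?_⟩
      have : dist (x + y - z) w = dist z (x + y - w) := by
        rw [dist_eq_norm, dist_eq_norm, ← norm_neg]; congr 1; abel
      rw [this]
      exact hz2 _ (hsym w hw)


section Equiv

variable {Z : Set E} {H H' : E → E}

lemma diam_image_le (hiso : ∀ x ∈ Z, ∀ y ∈ Z, dist (H x) (H y) = dist x y)
    {s : Set E} (hs : s ⊆ Z) (hbs : IsBounded s) : Metric.diam (H '' s) ≤ Metric.diam s := by
  apply Metric.diam_le_of_forall_dist_le Metric.diam_nonneg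
  rintro a ⟨a', ha', rfl⟩ b ⟨b', hb', rfl⟩
  rw [hiso a' (hs ha') b' (hs hb')]
  exact Metric.dist_le_diam_of_mem hbs ha' hb'

lemma image_bounded (hiso : ∀ x ∈ Z, ∀ y ∈ Z, dist (H x) (H y) = dist x y)
    {s : Set E} (hs : s ⊆ Z) (hbs : IsBounded s) : IsBounded (H '' s) := by
  rcases s.eq_empty_or_nonempty with rfl | ⟨a₀, ha₀⟩
  · simp
  · apply (isBounded_closedBall (x := H a₀) (r := Metric.diam s)).subset
    rintro a ⟨a', ha', rfl⟩
    rw [mem_closedBall, hiso a' (hs ha') a₀ (hs ha₀)]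
    exact Metric.dist_le_diam_of_mem hbs ha' ha₀

lemma diam_image_eq (hH : ∀ z ∈ Z, H z ∈ Z) (hinv : ∀ z ∈ Z, H' (H z) = z)
    (hiso : ∀ x ∈ Z, ∀ y ∈ Z, dist (H x) (H y) = dist x y)
    (hiso' : ∀ x ∈ Z, ∀ y ∈ Z, dist (H' x) (H' y) = dist x y)
    {s : Set E} (hs : s ⊆ Z) (hbs : IsBounded s) : Metric.diam (H '' s) = Metric.diam s := by
  refine le_antisymm (diam_image_le hiso hs hbs) ?_
  have h1 : H' '' (H '' s) = s := by
    rw [← Set.image_comp]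
    apply Set.EqOn.image_eq_self
    intro z hz; exact hinv z (hs hz)
  have h2 := diam_image_le hiso' (s := H '' s) ?_ (image_bounded hiso hs hbs)
  · rwa [h1] at h2
  · rintro a ⟨a', ha', rfl⟩; exact hH a' (hs ha')

lemma mseq_image (hH : ∀ z ∈ Z, H z ∈ Z) (hH' : ∀ z ∈ Z, H' z ∈ Z)
    (hinv : ∀ z ∈ Z, H' (H z) = z) (hinv' : ∀ z ∈ Z, H (H' z) = z)
    (hiso : ∀ x ∈ Z, ∀ y ∈ Z, dist (H x) (H y) = dist x y)
    (hiso' : ∀ x ∈ Z, ∀ y ∈ Z, dist (H' x) (H' y) = dist x y)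
    {x y : E} (hx : x ∈ Z) (hy : y ∈ Z) :
    ∀ n, H '' mseq Z x y n = mseq Z (H x) (H y) n := by
  have hd : dist (H x) (H y) = dist x y := hiso x hx y hy
  intro n
  induction n with
  | zero =>
    ext u
    constructor
    · rintro ⟨z, ⟨hzZ, hzx, hzy⟩, rfl⟩
      exact ⟨hH z hzZ, by rwa [hiso z hzZ x hx, hd], by rwa [hiso z hzZ y hy, hd]⟩
    · rintro ⟨huZ, hux, huy⟩
      refine ⟨H' u, ⟨hH' u huZ, ?_, ?_⟩, hinv' u huZ⟩
      · have e1 : dist (H' u) x = dist u (H x) := by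
          conv_lhs => rw [← hinv x hx]
          exact hiso' u huZ (H x) (hH x hx)
        rw [e1, ← hd]; exact hux
      · have e1 : dist (H' u) y = dist u (H y) := by
          conv_lhs => rw [← hinv y hy]
          exact hiso' u huZ (H y) (hH y hy)
        rw [e1, ← hd]; exact huy
  | succ n ih =>
    have hdiam : Metric.diam (mseq Z (H x) (H y) n) = Metric.diam (mseq Z x y n) := by
      rw [← ih]
      exact diam_image_eq hH hinv hiso hiso' (mseq_subset_Z Z x y n) (mseq_bounded Z x y n)
    ext u
    constructor
    · rintro ⟨z, ⟨hz, hz2⟩, rfl⟩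
      refine ⟨ih ▸ Set.mem_image_of_mem H hz, ?_⟩
      intro w hw
      rw [← ih] at hw
      obtain ⟨w', hw', rfl⟩ := hw
      rw [hiso z (mseq_subset_Z Z x y n hz) w' (mseq_subset_Z Z x y n hw'), hdiam]
      exact hz2 w' hw'
    · rintro ⟨hu, hu2⟩
      have hu' : u ∈ H '' mseq Z x y n := ih ▸ hu
      obtain ⟨z, hz, rfl⟩ := hu'
      refine ⟨z, ⟨hz, ?_⟩, rfl⟩
      intro w hw
      have hw' : H w ∈ mseq Z (H x) (H y) n := ih ▸ Set.mem_image_of_mem H hw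
      have := hu2 (H w) hw'
      rwa [hiso z (mseq_subset_Z Z x y n hz) w (mseq_subset_Z Z x y n hw), hdiam] at this


lemma mid_preserved (hH : ∀ z ∈ Z, H z ∈ Z) (hH' : ∀ z ∈ Z, H' z ∈ Z)
    (hinv : ∀ z ∈ Z, H' (H z) = z) (hinv' : ∀ z ∈ Z, H (H' z) = z)
    (hiso : ∀ x ∈ Z, ∀ y ∈ Z, dist (H x) (H y) = dist x y)
    (hiso' : ∀ x ∈ Z, ∀ y ∈ Z, dist (H' x) (H' y) = dist x y)
    {x y : E} (hx : x ∈ Z) (hy : y ∈ Z)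
    (hbx : closedBall x (dist x y / 2) ⊆ Z)
    (hbx' : closedBall (H x) (dist x y / 2) ⊆ Z) :
    H (midpoint ℝ x y) = midpoint ℝ (H x) (H y) := by
  have hd : dist (H x) (H y) = dist x y := hiso x hx y hy
  set m := midpoint ℝ x y
  set m' := midpoint ℝ (H x) (H y)
  have h1 : ∀ n, H m ∈ mseq Z (H x) (H y) n := fun n =>
    (mseq_image hH hH' hinv hinv' hiso hiso' hx hy n) ▸
      Set.mem_image_of_mem H ((mseq_mid_mem Z x y hbx n).1)
  have h2 : ∀ n, m' ∈ mseq Z (H x) (H y) n := fun n =>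
    (mseq_mid_mem Z (H x) (H y) (by rwa [hd]) n).1
  have h3 : ∀ n, dist (H m) m' ≤ dist x y / 2 ^ n := fun n =>
    le_trans (Metric.dist_le_diam_of_mem (mseq_bounded Z (H x) (H y) n) (h1 n) (h2 n))
      (hd ▸ mseq_diam Z (H x) (H y) n)
  rcases le_or_gt (dist (H m) m') 0 with hle | hlt
  · exact dist_le_zero.1 hle
  · exfalso
    obtain ⟨n, hn⟩ := pow_unbounded_of_one_lt (dist x y / dist (H m) m') (one_lt_two)
    have h4 : dist x y / 2 ^ n < dist (H m) m' := by
      rw [div_lt_iff₀ (by positivity)]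
      rw [div_lt_iff₀ hlt] at hn
      linarith
    linarith [h3 n]

end Equiv

lemma ball_preserved [MeasurableSpace E] [BorelSpace E] [FiniteDimensional ℝ E]
    {Z : Set E} {H H' : E → E}
    (hZc : IsCompact Z)
    (hH : ∀ z ∈ Z, H z ∈ Z) (hH' : ∀ z ∈ Z, H' z ∈ Z)
    (hinv : ∀ z ∈ Z, H' (H z) = z) (hinv' : ∀ z ∈ Z, H (H' z) = z)
    (hiso : ∀ x ∈ Z, ∀ y ∈ Z, dist (H x) (H y) = dist x y)
    (hiso' : ∀ x ∈ Z, ∀ y ∈ Z, dist (H' x) (H' y) = dist x y)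
    {z : E} (hz : z ∈ Z) {r : ℝ} (hr : 0 ≤ r) (hball : closedBall z r ⊆ Z) :
    closedBall (H z) r ⊆ Z := by
  set μ : Measure E := μH[(Module.finrank ℝ E : ℝ)] with hμ
  have : Measure.IsAddHaarMeasure μ := MeasureTheory.isAddHaarMeasure_hausdorffMeasure
  -- image of the ball
  have himg : H '' closedBall z r = closedBall (H z) r ∩ Z := by
    ext u
    constructor
    · rintro ⟨a, ha, rfl⟩
      have haZ : a ∈ Z := hball ha
      exact ⟨by rw [mem_closedBall, hiso a haZ z hz]; exact ha, hH a haZ⟩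
    · rintro ⟨hu1, hu2⟩
      refine ⟨H' u, ?_, hinv' u hu2⟩
      rw [mem_closedBall]
      calc dist (H' u) z = dist (H' u) (H' (H z)) := by rw [hinv z hz]
        _ = dist u (H z) := hiso' u hu2 (H z) (hH z hz)
        _ ≤ r := hu1
  have himg' : H' '' (closedBall (H z) r ∩ Z) = closedBall z r := by
    rw [← himg, ← Set.image_comp]
    apply Set.EqOn.image_eq_self
    intro a ha; exact hinv a (hball ha)
  -- measure bounds for images of subsets of Z
  have hmono : ∀ (G : E → E), (∀ x ∈ Z, ∀ y ∈ Z, dist (G x) (G y) = dist x y) →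
      ∀ s ⊆ Z, μ (G '' s) ≤ μ s := by
    intro G hG s hs
    have hlip : LipschitzOnWith 1 G s := by
      apply LipschitzOnWith.of_dist_le_mul
      intro a ha b hb
      rw [hG a (hs ha) b (hs hb), NNReal.coe_one, one_mul]
    have := hlip.hausdorffMeasure_image_le (d := (Module.finrank ℝ E : ℝ)) (by positivity)
    simpa using this
  have hmeq : μ (closedBall (H z) r ∩ Z) = μ (closedBall z r) := by
    apply le_antisymm
    · calc μ (closedBall (H z) r ∩ Z) = μ (H '' closedBall z r) := by rw [himg]
        _ ≤ μ (closedBall z r) := hmono H hiso _ hball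
    · calc μ (closedBall z r) = μ (H' '' (closedBall (H z) r ∩ Z)) := by rw [himg']
        _ ≤ μ (closedBall (H z) r ∩ Z) := hmono H' hiso' _ (Set.inter_subset_right)
  -- translation invariance
  have htrans : μ (closedBall (H z) r) = μ (closedBall z r) := by
    have : (H z - z) +ᵥ closedBall z r = closedBall (H z) r := by
      rw [Metric.vadd_closedBall]
      congr 1
      simp [vadd_eq_add]
    rw [← this, measure_vadd]
  -- the complement within the ball has measure zero
  have hZm : MeasurableSet Z := hZc.isClosed.measurableSet
  have hfin : μ (closedBall (H z) r) ≠ ⊤ :=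
    (isCompact_closedBall (H z) r).measure_lt_top.ne
  have hdiff : μ (closedBall (H z) r \ Z) = 0 := by
    have h := measure_inter_add_diff (μ := μ) (closedBall (H z) r) hZm
    rw [hmeq, ← htrans] at h
    nth_rewrite 2 [← add_zero (μ (closedBall (H z) r))] at h
    exact (ENNReal.add_right_inj hfin).mp h
  -- now conclude
  intro p hp
  by_contra hpZ
  have hw : H z ∈ Z := hH z hz
  have hpw : p ≠ H z := fun h => hpZ (h ▸ hw)
  have hD : 0 < dist p (H z) := dist_pos.mpr hpw
  set D := dist p (H z) with hDdef
  have hDr : D ≤ r := hp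
  obtain ⟨ε, hε, hεball⟩ := Metric.isOpen_iff.mp hZc.isClosed.isOpen_compl p hpZ
  set ρ := min ε D / 2 with hρdef
  have hρ : 0 < ρ := by positivity
  set q := p + (ρ / D) • (H z - p) with hq
  have hqp : dist q p = ρ := by
    rw [dist_eq_norm, hq]
    simp only [add_sub_cancel_left, norm_smul, Real.norm_eq_abs]
    rw [abs_of_pos (by positivity), ← dist_eq_norm, dist_comm, ← hDdef]
    field_simp
  have hqw : dist q (H z) = D - ρ := by
    rw [dist_eq_norm]
    have : q - H z = (1 - ρ / D) • (p - H z) := by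
      rw [hq]; rw [smul_sub, sub_smul, one_smul]; module
    rw [this, norm_smul, Real.norm_eq_abs, abs_of_nonneg, ← dist_eq_norm, ← hDdef]
    · field_simp
    · have : ρ ≤ D / 2 := by
        rw [hρdef]; have := min_le_right ε D; linarith
      rw [sub_nonneg, div_le_one hD]; linarith
  have hsub : ball q (ρ / 2) ⊆ closedBall (H z) r \ Z := by
    intro u hu
    have hu1 : dist u q < ρ / 2 := hu
    constructor
    · rw [mem_closedBall]
      calc dist u (H z) ≤ dist u q + dist q (H z) := dist_triangle _ _ _
        _ ≤ ρ / 2 + (D - ρ) := by rw [hqw]; linarith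
        _ ≤ r := by linarith
    · intro huZ
      have : dist u p < ε := by
        calc dist u p ≤ dist u q + dist q p := dist_triangle _ _ _
          _ < ρ / 2 + ρ := by rw [hqp]; linarith
          _ ≤ ε := by
            have := min_le_left ε D
            rw [hρdef] at *
            linarith
      exact hεball this huZ
  have hpos : 0 < μ (ball q (ρ / 2)) :=
    measure_ball_pos μ q (by positivity)
  have : μ (ball q (ρ / 2)) = 0 := le_antisymm (hdiff ▸ measure_mono hsub) zero_le
  rw [this] at hpos
  exact lt_irrefl 0 hpos


section Chain

variable [MeasurableSpace E] [BorelSpace E] [FiniteDimensional ℝ E]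
variable {Z : Set E} {H H' : E → E}

/-- Division of a segment into `n` equal parts: `H` acts affinely on the division points,
provided the segment is `δ`-deep inside `Z` and steps have length `≤ δ`. -/
lemma chain (hZc : IsCompact Z)
    (hH : ∀ z ∈ Z, H z ∈ Z) (hH' : ∀ z ∈ Z, H' z ∈ Z)
    (hinv : ∀ z ∈ Z, H' (H z) = z) (hinv' : ∀ z ∈ Z, H (H' z) = z)
    (hiso : ∀ x ∈ Z, ∀ y ∈ Z, dist (H x) (H y) = dist x y)
    (hiso' : ∀ x ∈ Z, ∀ y ∈ Z, dist (H' x) (H' y) = dist x y)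
    {x y : E} {δ : ℝ} (hδ : 0 < δ)
    (hKball : ∀ p ∈ segment ℝ x y, closedBall p δ ⊆ Z)
    {n : ℕ} (hn : 0 < n) (hstep : ‖y - x‖ / n ≤ δ) :
    ∀ i ≤ n, H (x + ((i : ℝ) / n) • (y - x)) = H x + ((i : ℝ) / n) • (H y - H x) := by
  have hn' : (0 : ℝ) < n := by exact_mod_cast hn
  set p : ℕ → E := fun i => x + ((i : ℝ) / n) • (y - x) with hp
  have hpK : ∀ i, i ≤ n → p i ∈ segment ℝ x y := by
    intro i hi
    rw [segment_eq_image']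
    exact ⟨(i : ℝ) / n, ⟨by positivity, by
      rw [div_le_one hn']; exact_mod_cast hi⟩, rfl⟩
  have hpZ : ∀ i, i ≤ n → p i ∈ Z := fun i hi =>
    hKball _ (hpK i hi) (mem_closedBall_self hδ.le)
  have hdist : ∀ i : ℕ, dist (p i) (p (i + 2)) = 2 * (‖y - x‖ / n) := by
    intro i
    rw [dist_eq_norm]
    have : p i - p (i + 2) = -((2 : ℝ) / n) • (y - x) := by
      simp only [hp]
      push_cast
      match_scalars <;> ring
    rw [this, norm_smul, Real.norm_eq_abs, abs_neg, abs_of_pos (by positivity)]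
    ring
  have hmid2 : ∀ i : ℕ, midpoint ℝ (p i) (p (i + 2)) = p (i + 1) := by
    intro i
    rw [midpoint_eq_smul_add]
    simp only [hp, invOf_eq_inv]
    push_cast
    match_scalars <;> field_simp <;> ring
  set q : ℕ → E := fun i => H (p i) with hq
  have hrec : ∀ i : ℕ, i + 2 ≤ n → q i + q (i + 2) = q (i + 1) + q (i + 1) := by
    intro i hi
    have h1 : closedBall (p i) (dist (p i) (p (i + 2)) / 2) ⊆ Z := by
      rw [hdist i]
      refine subset_trans (closedBall_subset_closedBall ?_) (hKball _ (hpK i (by omega)))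
      linarith
    have h2 : closedBall (H (p i)) (dist (p i) (p (i + 2)) / 2) ⊆ Z :=
      ball_preserved hZc hH hH' hinv hinv' hiso hiso' (hpZ i (by omega))
        (by positivity) h1
    have h3 := mid_preserved hH hH' hinv hinv' hiso hiso'
      (hpZ i (by omega)) (hpZ (i + 2) hi) h1 h2
    rw [hmid2 i] at h3
    have := midpoint_add_self ℝ (H (p i)) (H (p (i + 2)))
    rw [← h3] at this
    exact this.symm
  -- arithmetic progression
  have hprog : ∀ i : ℕ, (i ≤ n → q i = q 0 + (i : ℝ) • (q 1 - q 0)) ∧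
      (i + 1 ≤ n → q (i + 1) = q 0 + ((i : ℝ) + 1) • (q 1 - q 0)) := by
    intro i
    induction i with
    | zero =>
      constructor
      · intro _; simp
      · intro _; simp
    | succ i ih =>
      refine ⟨fun hi => by simpa using ih.2 hi, fun hi => ?_⟩
      have e0 := ih.1 (by omega)
      have e1 := ih.2 (by omega)
      have e2 := hrec i (by omega)
      have : q (i + 2) = q (i + 1) + q (i + 1) - q i := by
        rw [← e2]; abel
      rw [show i + 1 + 1 = i + 2 from rfl, this, e0, e1]
      push_cast
      module
  -- identify the common difference
  have hpn : p n = y := by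
    simp only [hp]
    rw [div_self (ne_of_gt hn'), one_smul]
    abel
  have hp0 : p 0 = x := by simp [hp]
  have hqn : q n = q 0 + (n : ℝ) • (q 1 - q 0) := (hprog n).1 le_rfl
  intro i hi
  have hqi : q i = q 0 + (i : ℝ) • (q 1 - q 0) := (hprog i).1 hi
  have hnne : (n : ℝ) ≠ 0 := ne_of_gt hn'
  have hv : q 1 - q 0 = ((n : ℝ)⁻¹ * 1) • (q n - q 0) := by
    rw [hqn]
    match_scalars <;> field_simp <;> ring
  show q i = H x + ((i : ℝ) / n) • (H y - H x)
  rw [hqi, hv]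
  have hq0 : q 0 = H x := congrArg H hp0
  have hqny : q n = H y := congrArg H hpn
  rw [hq0, hqny]
  match_scalars <;> field_simp

end Chain

section Rest
variable [MeasurableSpace E] [BorelSpace E] [FiniteDimensional ℝ E]
variable {Z : Set E} {H H' : E → E}


/-- `H` acts affinely on segments between interior points. -/
lemma interior_affine (hZc : IsCompact Z) (hZconv : Convex ℝ Z)
    (hH : ∀ z ∈ Z, H z ∈ Z) (hH' : ∀ z ∈ Z, H' z ∈ Z)
    (hinv : ∀ z ∈ Z, H' (H z) = z) (hinv' : ∀ z ∈ Z, H (H' z) = z)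
    (hiso : ∀ x ∈ Z, ∀ y ∈ Z, dist (H x) (H y) = dist x y)
    (hiso' : ∀ x ∈ Z, ∀ y ∈ Z, dist (H' x) (H' y) = dist x y)
    {x y : E} (hx : x ∈ interior Z) (hy : y ∈ interior Z)
    {t : ℝ} (ht0 : 0 ≤ t) (ht1 : t ≤ 1) :
    H (x + t • (y - x)) = H x + t • (H y - H x) := by
  have hK : segment ℝ x y ⊆ interior Z := hZconv.interior.segment_subset hx hy
  have hcomp : IsCompact (segment ℝ x y) := by
    rw [segment_eq_image']
    exact isCompact_Icc.image (continuous_const.add (continuous_id.smul continuous_const))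
  obtain ⟨δ, hδ, hδsub⟩ := hcomp.exists_cthickening_subset_open isOpen_interior hK
  have hKball : ∀ p ∈ segment ℝ x y, closedBall p δ ⊆ Z := fun p hp =>
    ((closedBall_subset_cthickening hp δ).trans hδsub).trans interior_subset
  have hmemZ : ∀ s : ℝ, 0 ≤ s → s ≤ 1 → x + s • (y - x) ∈ Z := by
    intro s h0 h1
    refine interior_subset (hK ?_)
    rw [segment_eq_image']
    exact ⟨s, ⟨h0, h1⟩, rfl⟩
  have hnorm : ‖H y - H x‖ = ‖y - x‖ := by
    have := hiso y (interior_subset hy) x (interior_subset hx)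
    rwa [dist_eq_norm, dist_eq_norm] at this
  -- the key estimate for every large n
  have hbound : ∀ n : ℕ, 0 < n → ‖y - x‖ / n ≤ δ →
      dist (H (x + t • (y - x))) (H x + t • (H y - H x)) ≤ 2 * ‖y - x‖ / n := by
    intro n hn hstep
    have hn' : (0 : ℝ) < n := by exact_mod_cast hn
    set i : ℕ := ⌊t * n⌋₊ with hidef
    have hip : (0:ℝ) ≤ t * n := by positivity
    have hi_le : i ≤ n := by
      have h1 : t * n ≤ (n : ℝ) := by nlinarith
      calc i = ⌊t * (n:ℝ)⌋₊ := rfl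
        _ ≤ ⌊(n : ℝ)⌋₊ := Nat.floor_le_floor h1
        _ = n := Nat.floor_natCast n
    have hfl1 : (i : ℝ) ≤ t * n := Nat.floor_le hip
    have hfl2 : t * n < (i : ℝ) + 1 := Nat.lt_floor_add_one _
    have habs : |t - (i : ℝ) / n| ≤ 1 / n := by
      rw [abs_le]
      have e1 : (i:ℝ)/n ≤ t := by
        rw [div_le_iff₀ hn']; exact hfl1
      have e2 : t - (i:ℝ)/n < 1/n := by
        rw [sub_lt_iff_lt_add, ← add_div, lt_div_iff₀ hn']
        linarith
      constructor
      · have : (0:ℝ) < 1/n := by positivity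
        linarith
      · linarith
    have hkey := chain hZc hH hH' hinv hinv' hiso hiso' hδ hKball hn hstep i hi_le
    have hd1 : dist (H (x + t • (y - x))) (H (x + ((i:ℝ)/n) • (y - x))) ≤ ‖y - x‖ / n := by
      rw [hiso _ (hmemZ t ht0 ht1) _ (hmemZ ((i:ℝ)/n) (by positivity)
        (by rw [div_le_one hn']; exact_mod_cast hi_le))]
      rw [dist_eq_norm]
      have : x + t • (y - x) - (x + ((i:ℝ)/n) • (y - x)) = (t - (i:ℝ)/n) • (y - x) := by
        module
      rw [this, norm_smul, Real.norm_eq_abs]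
      calc |t - (i:ℝ)/n| * ‖y - x‖ ≤ (1/n) * ‖y - x‖ := by
            apply mul_le_mul_of_nonneg_right habs (norm_nonneg _)
        _ = ‖y - x‖ / n := by ring
    have hd2 : dist (H x + ((i:ℝ)/n) • (H y - H x)) (H x + t • (H y - H x)) ≤ ‖y - x‖ / n := by
      rw [dist_eq_norm]
      have : H x + ((i:ℝ)/n) • (H y - H x) - (H x + t • (H y - H x))
          = ((i:ℝ)/n - t) • (H y - H x) := by module
      rw [this, norm_smul, Real.norm_eq_abs, hnorm, abs_sub_comm]
      calc |t - (i:ℝ)/n| * ‖y - x‖ ≤ (1/n) * ‖y - x‖ := by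
            apply mul_le_mul_of_nonneg_right habs (norm_nonneg _)
        _ = ‖y - x‖ / n := by ring
    calc dist (H (x + t • (y - x))) (H x + t • (H y - H x))
        ≤ dist (H (x + t • (y - x))) (H (x + ((i:ℝ)/n) • (y - x)))
          + dist (H (x + ((i:ℝ)/n) • (y - x))) (H x + t • (H y - H x)) := dist_triangle _ _ _
      _ ≤ ‖y - x‖ / n + ‖y - x‖ / n := by
          exact add_le_add hd1 (by rw [hkey]; exact hd2)
      _ = 2 * ‖y - x‖ / n := by ring
  -- conclude
  by_contra hne
  have hpos : 0 < dist (H (x + t • (y - x))) (H x + t • (H y - H x)) :=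
    dist_pos.mpr fun h => hne h
  set ε := dist (H (x + t • (y - x))) (H x + t • (H y - H x)) with hε
  set n : ℕ := ⌈‖y - x‖ / δ⌉₊ + ⌈2 * ‖y - x‖ / ε⌉₊ + 1 with hn
  have hn0 : 0 < n := by omega
  have hn' : (0:ℝ) < n := by exact_mod_cast hn0
  have hstep : ‖y - x‖ / n ≤ δ := by
    rw [div_le_iff₀ hn']
    have h1 : ‖y - x‖ / δ ≤ ⌈‖y - x‖ / δ⌉₊ := Nat.le_ceil _
    have h2 : (⌈‖y - x‖ / δ⌉₊ : ℝ) ≤ n := by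
      have : ⌈‖y - x‖ / δ⌉₊ ≤ n := by omega
      exact_mod_cast this
    calc ‖y - x‖ ≤ (‖y - x‖ / δ) * δ := by rw [div_mul_cancel₀]; exact ne_of_gt hδ
      _ ≤ (⌈‖y - x‖ / δ⌉₊ : ℝ) * δ := by nlinarith
      _ ≤ δ * n := by nlinarith
  have hlt : 2 * ‖y - x‖ / n < ε := by
    rw [div_lt_iff₀ hn']
    have h1 : 2 * ‖y - x‖ / ε ≤ ⌈2 * ‖y - x‖ / ε⌉₊ := Nat.le_ceil _
    have h2 : (⌈2 * ‖y - x‖ / ε⌉₊ : ℝ) + 1 ≤ n := by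
      have : ⌈2 * ‖y - x‖ / ε⌉₊ + 1 ≤ n := by omega
      exact_mod_cast this
    calc 2 * ‖y - x‖ ≤ (2 * ‖y - x‖ / ε) * ε := by rw [div_mul_cancel₀]; exact ne_of_gt hpos
      _ ≤ (⌈2 * ‖y - x‖ / ε⌉₊ : ℝ) * ε := by nlinarith [Nat.le_ceil (2 * ‖y - x‖ / ε)]
      _ < ε * (n:ℝ) := by nlinarith
  exact absurd (hbound n hn0 hstep) (not_le.mpr hlt)

lemma exists_linearIsometry (hZc : IsCompact Z) (hZconv : Convex ℝ Z)
    (hZint : (interior Z).Nonempty)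
    (hH : ∀ z ∈ Z, H z ∈ Z) (hH' : ∀ z ∈ Z, H' z ∈ Z)
    (hinv : ∀ z ∈ Z, H' (H z) = z) (hinv' : ∀ z ∈ Z, H (H' z) = z)
    (hiso : ∀ x ∈ Z, ∀ y ∈ Z, dist (H x) (H y) = dist x y)
    (hiso' : ∀ x ∈ Z, ∀ y ∈ Z, dist (H' x) (H' y) = dist x y) :
    ∃ A : E →ₗᵢ[ℝ] E, ∀ z ∈ Z, H z = A z + (H (Classical.choose hZint) - A (Classical.choose hZint)) := by
  set z₀ := Classical.choose hZint with hz₀def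
  have hz₀ : z₀ ∈ interior Z := Classical.choose_spec hZint
  have hz₀Z : z₀ ∈ Z := interior_subset hz₀
  obtain ⟨ρ, hρ, hballint⟩ := Metric.isOpen_iff.mp isOpen_interior z₀ hz₀
  have hball : ∀ v : E, ‖v‖ < ρ → z₀ + v ∈ interior Z := by
    intro v hv
    apply hballint
    rw [mem_ball, dist_eq_norm]
    simpa using hv
  have aff := fun {x y : E} (hx : x ∈ interior Z) (hy : y ∈ interior Z) {t : ℝ} ht0 ht1 =>
    interior_affine hZc hZconv hH hH' hinv hinv' hiso hiso' hx hy (t := t) ht0 ht1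
  -- the scaling parameter
  set tv : E → ℝ := fun v => ρ / (2 * (‖v‖ + 1)) with htvdef
  have htv : ∀ v, 0 < tv v := fun v => by positivity
  have htvnorm : ∀ v : E, ‖tv v • v‖ < ρ := by
    intro v
    rw [norm_smul, Real.norm_eq_abs, abs_of_pos (htv v), htvdef]
    have h1 : 0 < ‖v‖ + 1 := by positivity
    rw [div_mul_eq_mul_div, div_lt_iff₀ (by positivity)]
    nlinarith [norm_nonneg v]
  set L : E → E := fun v => (tv v)⁻¹ • (H (z₀ + tv v • v) - H z₀) with hLdef
  -- monotone comparison
  have aux : ∀ (v : E) (s₁ s₂ : ℝ), 0 < s₁ → s₁ ≤ s₂ → ‖s₂ • v‖ < ρ →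
      H (z₀ + s₁ • v) - H z₀ = (s₁ / s₂) • (H (z₀ + s₂ • v) - H z₀) := by
    intro v s₁ s₂ hs₁ hle hnorm
    have hs₂ : 0 < s₂ := lt_of_lt_of_le hs₁ hle
    have hy : z₀ + s₂ • v ∈ interior Z := hball _ hnorm
    have h := aff hz₀ hy (t := s₁ / s₂) (by positivity) (by rw [div_le_one hs₂]; exact hle)
    have e1 : z₀ + (s₁ / s₂) • (z₀ + s₂ • v - z₀) = z₀ + s₁ • v := by
      rw [add_sub_cancel_left, smul_smul, div_mul_cancel₀ _ (ne_of_gt hs₂)]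
    rw [e1] at h
    rw [h]
    abel
  have Lspec : ∀ (v : E) (s : ℝ), 0 < s → ‖s • v‖ < ρ →
      H (z₀ + s • v) = H z₀ + s • L v := by
    intro v s hs hsnorm
    rcases le_total s (tv v) with hle | hle
    · have h := aux v s (tv v) hs hle (htvnorm v)
      have e1 : H (z₀ + s • v) = H z₀ + (s / tv v) • (H (z₀ + tv v • v) - H z₀) := by
        rw [← h]; abel
      rw [e1]
      congr 1
      simp only [hLdef]
      rw [smul_smul, show s * (tv v)⁻¹ = s / tv v from by ring]
    · have h := aux v (tv v) s (htv v) hle hsnorm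
      have hL : L v = (tv v)⁻¹ • ((tv v / s) • (H (z₀ + s • v) - H z₀)) := by
        simp only [hLdef]
        rw [h]
      rw [hL, smul_smul, smul_smul,
        show s * (tv v)⁻¹ * (tv v / s) = 1 from by field_simp [(htv v).ne', hs.ne'], one_smul]
      abel
  -- basic properties of L
  have Lnorm : ∀ v, ‖L v‖ = ‖v‖ := by
    intro v
    have h1 : ‖H (z₀ + tv v • v) - H z₀‖ = ‖tv v • v‖ := by
      have hm : z₀ + tv v • v ∈ Z := interior_subset (hball _ (htvnorm v))
      have := hiso _ hm _ hz₀Z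
      rw [dist_eq_norm, dist_eq_norm] at this
      rw [this]; congr 1; abel
    simp only [hLdef]
    rw [norm_smul, Real.norm_eq_abs, abs_of_pos (inv_pos.mpr (htv v)), h1, norm_smul,
      Real.norm_eq_abs, abs_of_pos (htv v), ← mul_assoc, inv_mul_cancel₀ (ne_of_gt (htv v)), one_mul]
  have Lneg : ∀ v, L (-v) = - L v := by
    intro v
    set s := tv v with hs
    have hsv : ‖s • v‖ < ρ := htvnorm v
    have hsnegv : ‖s • (-v)‖ < ρ := by rwa [smul_neg, norm_neg]
    have ha : z₀ + s • (-v) ∈ interior Z := hball _ hsnegv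
    have hb : z₀ + s • v ∈ interior Z := hball _ hsv
    have h := aff ha hb (t := (1:ℝ)/2) (by norm_num) (by norm_num)
    have e1 : z₀ + s • (-v) + (1/2 : ℝ) • (z₀ + s • v - (z₀ + s • (-v))) = z₀ := by
      rw [smul_neg]; module
    rw [e1, Lspec _ _ (htv v) hsnegv, Lspec _ _ (htv v) hsv] at h
    have e2 : (s / 2) • (L (-v) + L v) = 0 := by
      have h2 : H z₀ = H z₀ + (s / 2) • (L (-v) + L v) := by
        conv_lhs => rw [h]
        module
      exact (left_eq_add.mp h2)
    rcases smul_eq_zero.mp e2 with h' | h'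
    · exact absurd h' (by positivity)
    · exact eq_neg_of_add_eq_zero_left h'
  have Lsmul_pos : ∀ (c : ℝ), 0 < c → ∀ v, L (c • v) = c • L v := by
    intro c hc v
    set s := tv (c • v) with hs
    have h1 : ‖s • (c • v)‖ < ρ := htvnorm (c • v)
    have h2 : ‖(s * c) • v‖ < ρ := by rwa [← smul_smul]
    have e1 := Lspec (c • v) s (htv _) h1
    have e2 := Lspec v (s * c) (by positivity) h2
    rw [← smul_smul] at e2
    have e4 : s • L (c • v) = s • (c • L v) := by
      have e5 := add_left_cancel (e1.symm.trans e2)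
      rw [e5, ← smul_smul]
    exact smul_right_injective E (ne_of_gt (htv (c • v))) e4
  have Lzero : L 0 = 0 := by
    have := Lspec 0 (tv 0) (htv 0) (by simpa using htvnorm 0)
    simp only [smul_zero, add_zero] at this
    have h0 : tv 0 • L 0 = 0 := by
      nth_rewrite 1 [show H z₀ = H z₀ + (0:E) from (add_zero _).symm] at this
      exact (add_left_cancel this).symm
    rcases smul_eq_zero.mp h0 with h' | h'
    · exact absurd h' (ne_of_gt (htv 0))
    · exact h'
  have Lsmul : ∀ (c : ℝ) (v : E), L (c • v) = c • L v := by
    intro c v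
    rcases lt_trichotomy c 0 with hc | hc | hc
    · have e1 : c • v = (-c) • (-v) := by module
      rw [e1, Lsmul_pos (-c) (by linarith) (-v), Lneg, smul_neg, neg_smul, neg_neg]
    · rw [hc, zero_smul, zero_smul, Lzero]
    · exact Lsmul_pos c hc v
  have Ladd : ∀ u v : E, L (u + v) = L u + L v := by
    intro u v
    set s := min (tv u) (tv v) with hsdef
    have hs : 0 < s := lt_min (htv u) (htv v)
    have hsu : ‖s • u‖ < ρ := by
      rw [norm_smul, Real.norm_eq_abs, abs_of_pos hs]
      calc s * ‖u‖ ≤ tv u * ‖u‖ := by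
            apply mul_le_mul_of_nonneg_right (min_le_left _ _) (norm_nonneg _)
        _ < ρ := by
            have := htvnorm u
            rwa [norm_smul, Real.norm_eq_abs, abs_of_pos (htv u)] at this
    have hsv : ‖s • v‖ < ρ := by
      rw [norm_smul, Real.norm_eq_abs, abs_of_pos hs]
      calc s * ‖v‖ ≤ tv v * ‖v‖ := by
            apply mul_le_mul_of_nonneg_right (min_le_right _ _) (norm_nonneg _)
        _ < ρ := by
            have := htvnorm v
            rwa [norm_smul, Real.norm_eq_abs, abs_of_pos (htv v)] at this
    have hsuv : ‖(s / 2) • (u + v)‖ < ρ := by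
      have : ‖(s / 2) • (u + v)‖ ≤ (‖s • u‖ + ‖s • v‖) / 2 := by
        rw [norm_smul, Real.norm_eq_abs, abs_of_pos (by positivity : (0:ℝ) < s / 2)]
        rw [norm_smul, norm_smul, Real.norm_eq_abs, abs_of_pos hs]
        have := norm_add_le u v
        nlinarith [norm_nonneg u, norm_nonneg v, norm_add_le u v]
      linarith
    have ha : z₀ + s • u ∈ interior Z := hball _ hsu
    have hb : z₀ + s • v ∈ interior Z := hball _ hsv
    have h := aff ha hb (t := (1:ℝ)/2) (by norm_num) (by norm_num)
    have e1 : z₀ + s • u + (1/2 : ℝ) • (z₀ + s • v - (z₀ + s • u)) = z₀ + (s/2) • (u + v) := by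
      module
    rw [e1, Lspec _ _ (by positivity) hsuv, Lspec _ _ hs hsu, Lspec _ _ hs hsv] at h
    have e2 : H z₀ + (s/2) • L (u + v) = H z₀ + (s/2) • (L u + L v) := by
      rw [h]
      module
    have e3 := add_left_cancel e2
    exact smul_right_injective E (by positivity : (s/2 : ℝ) ≠ 0) e3
  -- assemble the linear isometry
  set A : E →ₗᵢ[ℝ] E :=
    { toFun := L
      map_add' := Ladd
      map_smul' := Lsmul
      norm_map' := Lnorm } with hAdef
  refine ⟨A, ?_⟩
  have hAL : ∀ v, A v = L v := fun v => rfl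
  -- agreement on the interior
  have hint : ∀ z ∈ interior Z, H z = L (z - z₀) + H z₀ := by
    intro z hz
    set v := z - z₀ with hv
    set s : ℝ := min (tv v) 1 with hsdef
    have hs : 0 < s := lt_min (htv v) one_pos
    have hs1 : s ≤ 1 := min_le_right _ _
    have hsv : ‖s • v‖ < ρ := by
      rw [norm_smul, Real.norm_eq_abs, abs_of_pos hs]
      calc s * ‖v‖ ≤ tv v * ‖v‖ := by
            apply mul_le_mul_of_nonneg_right (min_le_left _ _) (norm_nonneg _)
        _ < ρ := by
            have := htvnorm v
            rwa [norm_smul, Real.norm_eq_abs, abs_of_pos (htv v)] at this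
    have h1 := aff hz₀ hz (t := s) hs.le hs1
    have h2 := Lspec v s hs hsv
    rw [show z₀ + s • (z - z₀) = z₀ + s • v from rfl] at h1
    rw [h1] at h2
    have e3 := add_left_cancel h2
    have e4 : H z - H z₀ = L v := smul_right_injective E (ne_of_gt hs) e3
    rw [← e4]
    abel
  -- agreement on all of Z by approximation from inside
  have hagree : ∀ z ∈ Z, H z = L (z - z₀) + H z₀ := by
    intro z hz
    by_contra hne
    set ε := ‖H z - (L (z - z₀) + H z₀)‖ with hεdef
    have hε : 0 < ε := by
      rw [hεdef, norm_pos_iff, sub_ne_zero]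
      exact hne
    set t : ℝ := min 1 (ε / (2 * ‖z₀ - z‖ + 1)) with htdef
    have ht0 : 0 < t := lt_min one_pos (by positivity)
    have ht1 : t ≤ 1 := min_le_left _ _
    set w := z + t • (z₀ - z) with hwdef
    have hw : w ∈ interior Z := hZconv.add_smul_sub_mem_interior hz hz₀ ⟨ht0, ht1⟩
    have hwz : ‖w - z‖ = t * ‖z₀ - z‖ := by
      rw [hwdef, add_sub_cancel_left, norm_smul, Real.norm_eq_abs, abs_of_pos ht0]
    have hHw : H w = L (w - z₀) + H z₀ := hint w hw
    have hd1 : ‖H z - H w‖ = ‖z - w‖ := by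
      have := hiso z hz w (interior_subset hw)
      rwa [dist_eq_norm, dist_eq_norm] at this
    have hd2 : ‖(L (w - z₀) + H z₀) - (L (z - z₀) + H z₀)‖ = ‖w - z‖ := by
      have e5 : L (w - z₀) - L (z - z₀) = L (w - z) := by
        have : (w : E) - z₀ = (w - z) + (z - z₀) := by abel
        rw [this, Ladd]
        abel
      have e6 : (L (w - z₀) + H z₀) - (L (z - z₀) + H z₀) = L (w - z) := by
        rw [← e5]; abel
      rw [e6, Lnorm]
    have hbound : ε ≤ 2 * (t * ‖z₀ - z‖) := by
      calc ε = ‖H z - (L (z - z₀) + H z₀)‖ := hεdef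
        _ ≤ ‖H z - H w‖ + ‖H w - (L (z - z₀) + H z₀)‖ := by
            have := norm_sub_le_norm_sub_add_norm_sub (H z) (H w) (L (z - z₀) + H z₀)
            exact this
        _ = ‖z - w‖ + ‖(L (w - z₀) + H z₀) - (L (z - z₀) + H z₀)‖ := by
            rw [hd1, hHw]
        _ = ‖z - w‖ + ‖w - z‖ := by rw [hd2]
        _ = 2 * (t * ‖z₀ - z‖) := by
            rw [norm_sub_rev z w, hwz]; ring
    have htsmall : t * (2 * ‖z₀ - z‖ + 1) ≤ ε := by
      calc t * (2 * ‖z₀ - z‖ + 1) ≤ (ε / (2 * ‖z₀ - z‖ + 1)) * (2 * ‖z₀ - z‖ + 1) := by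
            apply mul_le_mul_of_nonneg_right (min_le_right _ _) (by positivity)
        _ = ε := by field_simp
    nlinarith [norm_nonneg (z₀ - z), ht0]
  intro z hz
  rw [hagree z hz, hAL, hAL]
  have e8 : L z - L z₀ = L (z - z₀) := by
    conv_lhs => rw [show z = (z - z₀) + z₀ from by abel]
    rw [Ladd]
    abel
  rw [← e8]
  abel



end Rest
end Mankiewicz


/-- Mankiewicz: a surjective isometry of a convex body in a
finite-dimensional real normed space extends uniquely to an affine isometry;
in particular it is affine, h z = A z + b. -/

theorem stmt_7 {E : Type*} [NormedAddCommGroup E] [NormedSpace ℝ E]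
    [FiniteDimensional ℝ E] (Z : Set E)
    (hZc : IsCompact Z) (hZconv : Convex ℝ Z) (hZint : (interior Z).Nonempty)
    (h : Z → Z) (hsurj : Function.Surjective h)
    (hiso : ∀ x y : Z, ‖(h x : E) - (h y : E)‖ = ‖(x : E) - (y : E)‖) :
    (∃! F : E →ᵃⁱ[ℝ] E, ∀ z : Z, (h z : E) = F z) ∧
    (∃ (A : E →ₗᵢ[ℝ] E) (b : E), ∀ z : Z, (h z : E) = A z + b) := by
  borelize E
  classical
  have hinj : Function.Injective h := by
    intro a b hab
    have hab2 := hiso a b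
    rw [hab, sub_self, norm_zero] at hab2
    exact Subtype.coe_injective (sub_eq_zero.mp (norm_eq_zero.mp hab2.symm))
  set e : Z ≃ Z := Equiv.ofBijective h ⟨hinj, hsurj⟩ with hedef
  set H : E → E := fun x => if hx : x ∈ Z then ((h ⟨x, hx⟩ : Z) : E) else x with hHdef
  set H' : E → E := fun x => if hx : x ∈ Z then ((e.symm ⟨x, hx⟩ : Z) : E) else x with hH'def
  have hHval : ∀ (x : E) (hx : x ∈ Z), H x = (h ⟨x, hx⟩ : E) := fun x hx => by
    simp only [hHdef]; exact dif_pos hx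
  have hH'val : ∀ (x : E) (hx : x ∈ Z), H' x = (e.symm ⟨x, hx⟩ : E) := fun x hx => by
    simp only [hH'def]; exact dif_pos hx
  have hH : ∀ z ∈ Z, H z ∈ Z := fun z hz => by rw [hHval z hz]; exact (h ⟨z, hz⟩).2
  have hH' : ∀ z ∈ Z, H' z ∈ Z := fun z hz => by rw [hH'val z hz]; exact (e.symm ⟨z, hz⟩).2
  have hinvv : ∀ z ∈ Z, H' (H z) = z := by
    intro z hz
    rw [hHval z hz, hH'val _ (h ⟨z, hz⟩).2, Subtype.coe_eta,
      show h ⟨z, hz⟩ = e ⟨z, hz⟩ from rfl, Equiv.symm_apply_apply]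
  have hinvv' : ∀ z ∈ Z, H (H' z) = z := by
    intro z hz
    rw [hH'val z hz, hHval _ (e.symm ⟨z, hz⟩).2, Subtype.coe_eta,
      show h (e.symm ⟨z, hz⟩) = e (e.symm ⟨z, hz⟩) from rfl, Equiv.apply_symm_apply]
  have hisoH : ∀ x ∈ Z, ∀ y ∈ Z, dist (H x) (H y) = dist x y := by
    intro x hx y hy
    rw [hHval x hx, hHval y hy, dist_eq_norm, dist_eq_norm, hiso]
  have hisoH' : ∀ x ∈ Z, ∀ y ∈ Z, dist (H' x) (H' y) = dist x y := by
    intro x hx y hy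
    rw [hH'val x hx, hH'val y hy, dist_eq_norm, dist_eq_norm]
    have h2 := hiso (e.symm ⟨x, hx⟩) (e.symm ⟨y, hy⟩)
    rw [show h (e.symm ⟨x, hx⟩) = e (e.symm ⟨x, hx⟩) from rfl, Equiv.apply_symm_apply,
      show h (e.symm ⟨y, hy⟩) = e (e.symm ⟨y, hy⟩) from rfl, Equiv.apply_symm_apply] at h2
    exact h2.symm
  obtain ⟨A, hA⟩ := Mankiewicz.exists_linearIsometry hZc hZconv hZint hH hH' hinvv hinvv' hisoH hisoH'
  set z₀ : E := Classical.choose hZint with hz₀def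
  have hz₀int : z₀ ∈ interior Z := Classical.choose_spec hZint
  have hz₀Z : z₀ ∈ Z := interior_subset hz₀int
  set b : E := H z₀ - A z₀ with hbdef
  set F : E →ᵃⁱ[ℝ] E :=
    (AffineIsometryEquiv.constVAdd ℝ E b).toAffineIsometry.comp A.toAffineIsometry with hFdef
  have hFx : ∀ x : E, F x = b + A x := fun x => rfl
  have hhH : ∀ z : Z, (h z : E) = H (z : E) := by
    intro z
    rw [hHval _ z.2, Subtype.coe_eta]
  have hFagree : ∀ z : Z, (h z : E) = F z := by
    intro z
    rw [hhH z, hA _ z.2, hFx]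
    abel
  obtain ⟨ρ, hρ, hballsub⟩ := Metric.isOpen_iff.mp isOpen_interior z₀ hz₀int
  have huniq : ∀ F' : E →ᵃⁱ[ℝ] E, (∀ z : Z, (h z : E) = F' z) → F' = F := by
    intro F' hF'
    have hagree2 : ∀ w ∈ Z, F' w = F w := by
      intro w hw
      rw [← hF' ⟨w, hw⟩, ← hFagree ⟨w, hw⟩]
    have hmem : ∀ v : E, (ρ / (2 * (‖v‖ + 1))) • v + z₀ ∈ Z := by
      intro v
      refine interior_subset (hballsub ?_)
      rw [mem_ball, dist_eq_norm, add_sub_cancel_right, norm_smul, Real.norm_eq_abs,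
        abs_of_pos (by positivity)]
      rw [div_mul_eq_mul_div, div_lt_iff₀ (by positivity)]
      nlinarith [norm_nonneg v]
    have hlin : ∀ v : E, F'.linearIsometry v = F.linearIsometry v := by
      intro v
      set s : ℝ := ρ / (2 * (‖v‖ + 1)) with hsdef
      have hs : 0 < s := by positivity
      have h1 : F' (s • v +ᵥ z₀) = F (s • v +ᵥ z₀) := hagree2 _ (hmem v)
      rw [F'.map_vadd, F.map_vadd, hagree2 z₀ hz₀Z] at h1
      have h2 : F'.linearIsometry (s • v) = F.linearIsometry (s • v) := by
        have := vadd_right_cancel (F z₀) h1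
        exact this
      rw [F'.linearIsometry.map_smul, F.linearIsometry.map_smul] at h2
      exact smul_right_injective E (ne_of_gt hs) h2
    ext x
    have hx : x = (x - z₀) +ᵥ z₀ := by simp [vadd_eq_add]
    rw [hx, F'.map_vadd, F.map_vadd, hlin, hagree2 z₀ hz₀Z]
  constructor
  · exact ⟨F, hFagree, huniq⟩
  · refine ⟨A, b, fun z => ?_⟩
    rw [hhH z, hA _ z.2]
end

section
/- Let Z be a convex body in ℝ^N with an L^α-norm metric for α ≥ 1, α ≠ 2, and let h : Z → Z be a differentiable isometry of Z into itself up to a constant rescaling factor r > 0, i.e., δ(z, z̃) = δ(h(z)/r, h(z̃)/r) where δ(x, y) = ‖x − y‖_α. Then h is the composition of a rescaling by r, an input-independent permutation of coordinates, and coordinate-wise sign flips (possibly followed by a translation). -/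
open Real Set Filter Topology

lemma pf8_split {q x : ℝ} (hx : 0 < x) : x ^ q = x * x ^ (q-1) := by
  rw [show q = 1 + (q-1) by ring, Real.rpow_add hx, Real.rpow_one]; ring_nf

lemma pf8_sup_strict {q a b : ℝ} (hq : 1 < q) (ha : 0 < a) (hb : 0 < b) :
    a ^ q + b ^ q < (a + b) ^ q := by
  have hab : (0:ℝ) < a + b := by linarith
  have h1 : a ^ (q-1) < (a+b)^(q-1) := Real.rpow_lt_rpow ha.le (by linarith) (by linarith)
  have h2 : b ^ (q-1) < (a+b)^(q-1) := Real.rpow_lt_rpow hb.le (by linarith) (by linarith)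
  rw [pf8_split hab, pf8_split ha, pf8_split hb, add_mul]
  have := mul_lt_mul_of_pos_left h1 ha
  have := mul_lt_mul_of_pos_left h2 hb
  linarith

lemma pf8_sub_strict {q a b : ℝ} (hq0 : 0 < q) (hq : q < 1) (ha : 0 < a) (hb : 0 < b) :
    (a + b) ^ q < a ^ q + b ^ q := by
  have hab : (0:ℝ) < a + b := by linarith
  have h1 : (a+b)^(q-1) < a ^ (q-1) := Real.rpow_lt_rpow_of_neg ha (by linarith) (by linarith)
  have h2 : (a+b)^(q-1) < b ^ (q-1) := Real.rpow_lt_rpow_of_neg hb (by linarith) (by linarith)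
  rw [pf8_split hab, pf8_split ha, pf8_split hb, add_mul]
  have := mul_lt_mul_of_pos_left h1 ha
  have := mul_lt_mul_of_pos_left h2 hb
  linarith

lemma pf8_sup_le {q a b : ℝ} (hq : 1 ≤ q) (ha : 0 ≤ a) (hb : 0 ≤ b) :
    a ^ q + b ^ q ≤ (a + b) ^ q := by
  have hq0 : q ≠ 0 := by linarith
  rcases ha.eq_or_lt with rfl | ha'
  · simp [Real.zero_rpow hq0]
  rcases hb.eq_or_lt with rfl | hb'
  · simp [Real.zero_rpow hq0]
  rcases hq.eq_or_lt with rfl | hq'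
  · simp
  · exact (pf8_sup_strict hq' ha' hb').le

lemma pf8_sub_le {q a b : ℝ} (hq0 : 0 < q) (hq : q ≤ 1) (ha : 0 ≤ a) (hb : 0 ≤ b) :
    (a + b) ^ q ≤ a ^ q + b ^ q := by
  rcases ha.eq_or_lt with rfl | ha'
  · simp [Real.zero_rpow hq0.ne']
  rcases hb.eq_or_lt with rfl | hb'
  · simp [Real.zero_rpow hq0.ne']
  rcases hq.eq_or_lt with rfl | hq'
  · simp
  · exact (pf8_sub_strict hq0 hq' ha' hb').le

/-- convex power mean: q ≥ 1: 2 * ((a+b)/2)^q ≤ a^q + b^q -/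
lemma pf8_pm_convex {q a b : ℝ} (hq : 1 ≤ q) (ha : 0 ≤ a) (hb : 0 ≤ b) :
    2 * (((a + b)/2) ^ q) ≤ a ^ q + b ^ q := by
  have hc := (convexOn_rpow hq).2 (Set.mem_Ici.2 ha) (Set.mem_Ici.2 hb)
      (by norm_num : (0:ℝ) ≤ 1/2) (by norm_num : (0:ℝ) ≤ 1/2) (by norm_num)
  simp only [smul_eq_mul] at hc
  have : (1/2 : ℝ) * a + (1/2 : ℝ) * b = (a+b)/2 := by ring
  rw [this] at hc
  linarith

/-- concave power mean: 0 < q ≤ 1: a^q + b^q ≤ 2 * ((a+b)/2)^q -/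
lemma pf8_pm_concave {q a b : ℝ} (hq0 : 0 < q) (hq : q ≤ 1) (ha : 0 ≤ a) (hb : 0 ≤ b) :
    a ^ q + b ^ q ≤ 2 * (((a + b)/2) ^ q) := by
  set p := 1/q with hp
  have hp1 : 1 ≤ p := by rw [hp]; rw [le_div_iff₀ hq0]; linarith
  have hx : (0:ℝ) ≤ a ^ q := Real.rpow_nonneg ha q
  have hy : (0:ℝ) ≤ b ^ q := Real.rpow_nonneg hb q
  have hc := pf8_pm_convex hp1 hx hy
  have hxp : (a ^ q) ^ p = a := by
    rw [← Real.rpow_mul ha, hp, mul_one_div, div_self hq0.ne', Real.rpow_one]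
  have hyp : (b ^ q) ^ p = b := by
    rw [← Real.rpow_mul hb, hp, mul_one_div, div_self hq0.ne', Real.rpow_one]
  rw [hxp, hyp] at hc
  -- hc : 2 * ((a^q + b^q)/2)^p ≤ a + b
  have h2 : ((a ^ q + b ^ q)/2) ^ p ≤ (a + b)/2 := by linarith
  have h3 := Real.rpow_le_rpow (Real.rpow_nonneg (by positivity) p) h2 hq0.le
  rw [← Real.rpow_mul (by positivity), hp, one_div_mul_cancel hq0.ne', Real.rpow_one] at h3
  linarith

lemma pf8_abs_rpow_sq {α : ℝ} (s : ℝ) : (s^2) ^ (α/2) = |s| ^ α := by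
  rw [← sq_abs s, ← Real.rpow_natCast |s| 2, ← Real.rpow_mul (abs_nonneg s)]
  congr 1
  ring

lemma pf8_term_lt2 {α : ℝ} (hα1 : 1 ≤ α) (hαlt : α < 2) (s t : ℝ) :
    |s+t|^α + |s-t|^α ≤ 2*(|s|^α + |t|^α) ∧
    (|s+t|^α + |s-t|^α = 2*(|s|^α + |t|^α) → s = 0 ∨ t = 0) := by
  set q := α/2 with hq
  have hq0 : 0 < q := by rw [hq]; linarith
  have hq1 : q ≤ 1 := by rw [hq]; linarith
  have hq1' : q < 1 := by rw [hq]; linarith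
  have e1 : |s+t|^α = ((s+t)^2)^q := (pf8_abs_rpow_sq (s+t)).symm
  have e2 : |s-t|^α = ((s-t)^2)^q := (pf8_abs_rpow_sq (s-t)).symm
  have e3 : |s|^α = (s^2)^q := (pf8_abs_rpow_sq s).symm
  have e4 : |t|^α = (t^2)^q := (pf8_abs_rpow_sq t).symm
  have hsum : (s+t)^2 + (s-t)^2 = 2*(s^2 + t^2) := by ring
  have step1 : ((s+t)^2)^q + ((s-t)^2)^q ≤ 2 * ((s^2+t^2) ^ q) := by
    have := pf8_pm_concave hq0 hq1 (sq_nonneg (s+t)) (sq_nonneg (s-t))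
    rwa [hsum, show (2*(s^2+t^2))/2 = s^2 + t^2 by ring] at this
  have step2 : (s^2+t^2) ^ q ≤ (s^2)^q + (t^2)^q :=
    pf8_sub_le hq0 hq1 (sq_nonneg s) (sq_nonneg t)
  constructor
  · rw [e1, e2, e3, e4]; linarith
  · intro heq
    rw [e1, e2, e3, e4] at heq
    have heq2 : (s^2+t^2) ^ q = (s^2)^q + (t^2)^q := by linarith
    by_contra hcon
    push_neg at hcon
    have hs2 : 0 < s^2 := by have := abs_pos.mpr hcon.1; nlinarith [sq_abs s]
    have ht2 : 0 < t^2 := by have := abs_pos.mpr hcon.2; nlinarith [sq_abs t]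
    exact absurd heq2 (ne_of_lt (pf8_sub_strict hq0 hq1' hs2 ht2))

lemma pf8_term_gt2 {α : ℝ} (hαgt : 2 < α) (s t : ℝ) :
    2*(|s|^α + |t|^α) ≤ |s+t|^α + |s-t|^α ∧
    (|s+t|^α + |s-t|^α = 2*(|s|^α + |t|^α) → s = 0 ∨ t = 0) := by
  set q := α/2 with hq
  have hq1 : 1 < q := by rw [hq]; linarith
  have e1 : |s+t|^α = ((s+t)^2)^q := (pf8_abs_rpow_sq (s+t)).symm
  have e2 : |s-t|^α = ((s-t)^2)^q := (pf8_abs_rpow_sq (s-t)).symm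
  have e3 : |s|^α = (s^2)^q := (pf8_abs_rpow_sq s).symm
  have e4 : |t|^α = (t^2)^q := (pf8_abs_rpow_sq t).symm
  have hsum : (s+t)^2 + (s-t)^2 = 2*(s^2 + t^2) := by ring
  have step1 : 2 * ((s^2+t^2) ^ q) ≤ ((s+t)^2)^q + ((s-t)^2)^q := by
    have := pf8_pm_convex hq1.le (sq_nonneg (s+t)) (sq_nonneg (s-t))
    rwa [hsum, show (2*(s^2+t^2))/2 = s^2 + t^2 by ring] at this
  have step2 : (s^2)^q + (t^2)^q ≤ (s^2+t^2) ^ q :=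
    pf8_sup_le hq1.le (sq_nonneg s) (sq_nonneg t)
  constructor
  · rw [e1, e2, e3, e4]; linarith
  · intro heq
    rw [e1, e2, e3, e4] at heq
    have heq2 : (s^2+t^2) ^ q = (s^2)^q + (t^2)^q := by linarith
    by_contra hcon
    push_neg at hcon
    have hs2 : 0 < s^2 := by have := abs_pos.mpr hcon.1; nlinarith [sq_abs s]
    have ht2 : 0 < t^2 := by have := abs_pos.mpr hcon.2; nlinarith [sq_abs t]
    exact absurd heq2.symm (ne_of_lt (pf8_sup_strict hq1 hs2 ht2))

lemma pf8_linear_gp {N : ℕ} {α : ℝ} (hα1 : 1 ≤ α) (hα2 : α ≠ 2)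
    (L : (Fin N → ℝ) →ₗ[ℝ] (Fin N → ℝ))
    (hL : ∀ v, ∑ i, |L v i| ^ α = ∑ i, |v i| ^ α) :
    ∃ (σ : Equiv.Perm (Fin N)) (ε : Fin N → ℝ),
      (∀ i, ε i = 1 ∨ ε i = -1) ∧ ∀ v i, L v i = ε i * v (σ i) := by
  have hα0 : (0:ℝ) < α := by linarith
  set a : Fin N → Fin N → ℝ := fun i j => L (Pi.single j 1) i with ha
  -- column norms
  have col : ∀ j, ∑ i, |a i j| ^ α = 1 := by
    intro j
    have h1 := hL (Pi.single j 1)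
    rw [h1, Finset.sum_eq_single j]
    · simp
    · intro i _ hij
      rw [Pi.single_eq_of_ne hij, abs_zero, Real.zero_rpow hα0.ne']
    · intro habs; exact absurd (Finset.mem_univ j) habs
  -- sums for e_j ± e_k
  have pm_sum : ∀ (j k : Fin N), j ≠ k → ∀ (c : ℝ), |c| = 1 →
      ∑ i, |a i j + c * a i k| ^ α = 2 := by
    intro j k hjk c hc
    have hv : ∀ i, a i j + c * a i k
        = L ((Pi.single j 1 : Fin N → ℝ) + c • (Pi.single k 1 : Fin N → ℝ)) i := by
      intro i
      rw [map_add, map_smul]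
      simp [ha, Pi.add_apply, Pi.smul_apply, smul_eq_mul]
    rw [Finset.sum_congr rfl (fun i _ => by rw [hv i])]
    rw [hL]
    have hterm : ∀ i : Fin N, |((Pi.single j 1 : Fin N → ℝ) + c • (Pi.single k 1 : Fin N → ℝ)) i| ^ α
        = (if i = j then 1 else 0) + (if i = k then 1 else 0) := by
      intro i
      rw [Pi.add_apply, Pi.smul_apply, smul_eq_mul]
      by_cases hij : i = j
      · subst hij
        rw [Pi.single_eq_same, Pi.single_eq_of_ne hjk]
        rw [if_pos rfl, if_neg hjk]
        norm_num
      · rw [Pi.single_eq_of_ne hij, if_neg hij]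
        by_cases hik : i = k
        · subst hik
          rw [Pi.single_eq_same, if_pos rfl, mul_one, zero_add, hc, Real.one_rpow]
          norm_num
        · rw [Pi.single_eq_of_ne hik, if_neg hik, mul_zero, add_zero, abs_zero,
            Real.zero_rpow hα0.ne']
    rw [Finset.sum_congr rfl (fun i _ => hterm i), Finset.sum_add_distrib]
    simp only [Finset.sum_ite_eq', Finset.mem_univ, if_pos]
    norm_num
  -- orthogonality of columns
  have orth : ∀ j k, j ≠ k → ∀ i, a i j = 0 ∨ a i k = 0 := by
    intro j k hjk i
    have hplus := pm_sum j k hjk 1 (by norm_num)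
    have hminus := pm_sum j k hjk (-1) (by norm_num)
    simp only [one_mul] at hplus
    have hminus' : ∑ i, |a i j - a i k| ^ α = 2 := by
      rw [← hminus]; congr 1; ext i; ring_nf
    have hsum4 : ∑ i, (|a i j + a i k| ^ α + |a i j - a i k| ^ α) = 4 := by
      rw [Finset.sum_add_distrib, hplus, hminus']; norm_num
    have hsumQ : ∑ i, 2*(|a i j| ^ α + |a i k| ^ α) = 4 := by
      rw [← Finset.mul_sum, Finset.sum_add_distrib, col j, col k]; norm_num
    rcases lt_or_gt_of_ne hα2 with hlt | hgt
    · have hle : ∀ i ∈ Finset.univ, |a i j + a i k| ^ α + |a i j - a i k| ^ α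
          ≤ 2*(|a i j| ^ α + |a i k| ^ α) := fun i _ => (pf8_term_lt2 hα1 hlt _ _).1
      have := (Finset.sum_eq_sum_iff_of_le hle).mp (by rw [hsum4, hsumQ]) i (Finset.mem_univ i)
      exact (pf8_term_lt2 hα1 hlt _ _).2 this.symm.symm
    · have hle : ∀ i ∈ Finset.univ, 2*(|a i j| ^ α + |a i k| ^ α)
          ≤ |a i j + a i k| ^ α + |a i j - a i k| ^ α := fun i _ => (pf8_term_gt2 hgt _ _).1
      have := (Finset.sum_eq_sum_iff_of_le hle).mp (by rw [hsum4, hsumQ]) i (Finset.mem_univ i)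
      exact (pf8_term_gt2 hgt _ _).2 this.symm
  -- each column nonzero
  have colnz : ∀ j, ∃ i, a i j ≠ 0 := by
    intro j
    by_contra hcon
    push_neg at hcon
    have : ∑ i, |a i j| ^ α = 0 := by
      apply Finset.sum_eq_zero
      intro i _
      rw [hcon i, abs_zero, Real.zero_rpow hα0.ne']
    rw [col j] at this; norm_num at this
  choose τ hτ using colnz
  have hτinj : Function.Injective τ := by
    intro j k hjk2
    by_contra hne
    rcases orth j k hne (τ j) with h0 | h0
    · exact hτ j h0
    · exact hτ k (by rw [← hjk2]; exact h0)
  have hτbij : Function.Bijective τ := (Finite.injective_iff_bijective).mp hτinj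
  have hsupp : ∀ j i, i ≠ τ j → a i j = 0 := by
    intro j i hi
    obtain ⟨k, rfl⟩ := hτbij.2 i
    have hkj : k ≠ j := fun hkj => hi (by rw [hkj])
    rcases orth j k (Ne.symm hkj) (τ k) with h0 | h0
    · exact h0
    · exact absurd h0 (hτ k)
  set c : Fin N → ℝ := fun j => a (τ j) j with hc
  have habs1 : ∀ j, |c j| = 1 := by
    intro j
    have hcol := col j
    rw [Finset.sum_eq_single (τ j)] at hcol
    · have h01 : |c j| ∈ {y : ℝ | 0 ≤ y} := Set.mem_setOf.2 (abs_nonneg _)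
      have h02 : (1:ℝ) ∈ {y : ℝ | 0 ≤ y} := Set.mem_setOf.2 (by norm_num)
      refine Real.rpow_left_injOn hα0.ne' h01 h02 ?_
      show |c j| ^ α = (1:ℝ) ^ α
      rw [Real.one_rpow]
      exact hcol
    · intro i _ hi
      rw [hsupp j i hi, abs_zero, Real.zero_rpow hα0.ne']
    · intro habs; exact absurd (Finset.mem_univ _) habs
  set τe : Equiv.Perm (Fin N) := Equiv.ofBijective τ hτbij with hτe
  refine ⟨τe.symm, fun i => c (τe.symm i), ?_, ?_⟩
  · intro i
    rcases abs_eq (le_of_lt one_pos) |>.mp (habs1 (τe.symm i)) with h | h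
    · exact Or.inl h
    · exact Or.inr h
  · intro v i
    have hv : v = ∑ j, v j • (Pi.single j 1 : Fin N → ℝ) := by
      ext i
      rw [Finset.sum_apply]
      rw [Finset.sum_eq_single i]
      · simp
      · intro j _ hj
        simp [Pi.single_eq_of_ne (Ne.symm hj)]
      · intro habs; exact absurd (Finset.mem_univ _) habs
    have : L v i = ∑ j, v j * a i j := by
      conv_lhs => rw [hv]
      rw [map_sum, Finset.sum_apply]
      congr 1; ext j
      rw [map_smul]
      simp [ha]
    rw [this, Finset.sum_eq_single (τe.symm i)]
    · have hτa : τ (τe.symm i) = i := τe.apply_symm_apply i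
      have key : c (τe.symm i) = a i (τe.symm i) := by
        show a (τ (τe.symm i)) (τe.symm i) = a i (τe.symm i)
        rw [hτa]
      rw [← key]
      ring
    · intro j _ hj
      have hiτ : i ≠ τ j := by
        intro hij
        exact hj ((Equiv.eq_symm_apply τe).mpr hij.symm)
      rw [hsupp j i hiτ, mul_zero]
    · intro habs; exact absurd (Finset.mem_univ _) habs

lemma pf8_darboux_aux (S : Finset ℝ) {f f' : ℝ → ℝ} {a b : ℝ}
    (hf : ∀ x ∈ Set.Ioo a b, HasDerivAt f (f' x) x)
    (hS : ∀ x ∈ Set.Ioo a b, f' x ∈ S)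
    {u v : ℝ} (hu : u ∈ Set.Ioo a b) (hv : v ∈ Set.Ioo a b)
    (hlt : f' u < f' v) : False := by
  obtain ⟨m, hm, hmS⟩ : ∃ m, m ∈ Set.Ioo (f' u) (f' v) ∧ m ∉ S := by
    have hinf : (Set.Ioo (f' u) (f' v)).Infinite := Set.Ioo_infinite hlt
    obtain ⟨m, hm1, hm2⟩ := (hinf.diff (S.finite_toSet)).nonempty
    exact ⟨m, hm1, hm2⟩
  have huv : u ≠ v := fun he => absurd hlt (by rw [he]; exact lt_irrefl _)
  rcases lt_or_gt_of_ne huv with huv' | huv'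
  · have hsub : Set.Icc u v ⊆ Set.Ioo a b := fun t ht =>
      ⟨lt_of_lt_of_le hu.1 ht.1, lt_of_le_of_lt ht.2 hv.2⟩
    have hder : ∀ x ∈ Set.Icc u v, HasDerivWithinAt f (f' x) (Set.Icc u v) x :=
      fun x hx => (hf x (hsub hx)).hasDerivWithinAt
    obtain ⟨t, ht, hft⟩ := exists_hasDerivWithinAt_eq_of_gt_of_lt huv'.le hder hm.1 hm.2
    exact hmS (hft ▸ hS t (hsub (Set.Ioo_subset_Icc_self ht)))
  · have hsub : Set.Icc v u ⊆ Set.Ioo a b := fun t ht =>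
      ⟨lt_of_lt_of_le hv.1 ht.1, lt_of_le_of_lt ht.2 hu.2⟩
    have hder : ∀ x ∈ Set.Icc v u, HasDerivWithinAt f (f' x) (Set.Icc v u) x :=
      fun x hx => (hf x (hsub hx)).hasDerivWithinAt
    obtain ⟨t, ht, hft⟩ := exists_hasDerivWithinAt_eq_of_lt_of_gt huv'.le hder hm.2 hm.1
    exact hmS (hft ▸ hS t (hsub (Set.Ioo_subset_Icc_self ht)))

lemma pf8_darboux_const (S : Finset ℝ) {f f' : ℝ → ℝ} {a b : ℝ}
    (hf : ∀ x ∈ Set.Ioo a b, HasDerivAt f (f' x) x)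
    (hS : ∀ x ∈ Set.Ioo a b, f' x ∈ S)
    {x y : ℝ} (hx : x ∈ Set.Ioo a b) (hy : y ∈ Set.Ioo a b) : f' x = f' y := by
  rcases lt_trichotomy (f' x) (f' y) with hlt | heq | hgt
  · exact absurd (pf8_darboux_aux S hf hS hx hy hlt) not_false
  · exact heq
  · exact absurd (pf8_darboux_aux S hf hS hy hx hgt) not_false

lemma pf8_fderiv_isom {N : ℕ} {α r : ℝ} (hα0 : 0 < α) (hr : 0 < r)
    {Z : Set (Fin N → ℝ)} {h : (Fin N → ℝ) → (Fin N → ℝ)}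
    (hdiff : DifferentiableOn ℝ h Z)
    (hsum : ∀ z ∈ Z, ∀ z' ∈ Z, ∑ i, |h z i - h z' i| ^ α = r ^ α * ∑ i, |z i - z' i| ^ α)
    {z : Fin N → ℝ} (hz : z ∈ interior Z) (v : Fin N → ℝ) :
    ∑ i, |(fderiv ℝ h z) v i| ^ α = r ^ α * ∑ i, |v i| ^ α := by
  have hzZ : Z ∈ 𝓝 z := mem_interior_iff_mem_nhds.mp hz
  have hdiffz : DifferentiableAt ℝ h z := hdiff.differentiableAt hzZ
  have hF : HasFDerivAt h (fderiv ℝ h z) z := hdiffz.hasFDerivAt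
  set g : ℝ → (Fin N → ℝ) := fun t => h (z + t • v) with hg
  have hγ : HasDerivAt (fun t : ℝ => z + t • v) v 0 := by
    simpa using ((hasDerivAt_id (0:ℝ)).smul_const v).const_add z
  have hline : HasDerivAt g ((fderiv ℝ h z) v) 0 := by
    have hF' : HasFDerivAt h (fderiv ℝ h z) (z + (0:ℝ) • v) := by simpa using hF
    exact hF'.comp_hasDerivAt 0 hγ
  have hslope : Tendsto (slope g 0) (𝓝[≠] (0:ℝ)) (𝓝 ((fderiv ℝ h z) v)) :=
    hasDerivAt_iff_tendsto_slope.mp hline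
  have hΦ : Continuous (fun w : Fin N → ℝ => ∑ i, |w i| ^ α) := by
    apply continuous_finset_sum
    intro i _
    exact ((continuous_apply i).abs).rpow_const (fun w => Or.inr hα0.le)
  have h1 : Tendsto (fun t => ∑ i, |slope g 0 t i| ^ α) (𝓝[≠] (0:ℝ))
      (𝓝 (∑ i, |(fderiv ℝ h z) v i| ^ α)) := (hΦ.tendsto _).comp hslope
  have hmem : ∀ᶠ t in 𝓝 (0:ℝ), z + t • v ∈ interior Z := by
    have hcont : Continuous fun t : ℝ => z + t • v := by continuity
    have : (fun t : ℝ => z + t • v) ⁻¹' interior Z ∈ 𝓝 (0:ℝ) :=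
      hcont.continuousAt.preimage_mem_nhds (isOpen_interior.mem_nhds (by simpa using hz))
    exact this
  have hev : ∀ᶠ t in 𝓝[≠] (0:ℝ),
      (fun t => ∑ i, |slope g 0 t i| ^ α) t = r ^ α * ∑ i, |v i| ^ α := by
    filter_upwards [hmem.filter_mono nhdsWithin_le_nhds, self_mem_nhdsWithin] with t hmt hne
    have htne : t ≠ 0 := hne
    have hzZ' : z ∈ Z := interior_subset hz
    have hztZ : z + t • v ∈ Z := interior_subset hmt
    have hkey := hsum _ hztZ _ hzZ'
    have hslope_eq : ∀ i, slope g 0 t i = t⁻¹ * (h (z + t • v) i - h z i) := by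
      intro i
      rw [slope_def_module, sub_zero]
      simp [hg, Pi.smul_apply, Pi.sub_apply, smul_eq_mul]
    calc ∑ i, |slope g 0 t i| ^ α
        = ∑ i, |t⁻¹| ^ α * |h (z + t • v) i - h z i| ^ α := by
          refine Finset.sum_congr rfl fun i _ => ?_
          rw [hslope_eq i, abs_mul, Real.mul_rpow (abs_nonneg _) (abs_nonneg _)]
      _ = |t⁻¹| ^ α * ∑ i, |h (z + t • v) i - h z i| ^ α := by rw [← Finset.mul_sum]
      _ = |t⁻¹| ^ α * (r ^ α * ∑ i, |(z + t • v) i - z i| ^ α) := by rw [hkey]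
      _ = |t⁻¹| ^ α * (r ^ α * (|t| ^ α * ∑ i, |v i| ^ α)) := by
          congr 2
          calc ∑ i, |(z + t • v) i - z i| ^ α
              = ∑ i, |t| ^ α * |v i| ^ α := by
                refine Finset.sum_congr rfl fun i _ => ?_
                have heq : (z + t • v) i - z i = t * v i := by
                  simp [Pi.add_apply, Pi.smul_apply, smul_eq_mul]
                rw [heq, abs_mul, Real.mul_rpow (abs_nonneg _) (abs_nonneg _)]
            _ = |t| ^ α * ∑ i, |v i| ^ α := by rw [← Finset.mul_sum]
      _ = r ^ α * ∑ i, |v i| ^ α := by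
          have habs : |t⁻¹| ^ α * |t| ^ α = 1 := by
            rw [← Real.mul_rpow (abs_nonneg _) (abs_nonneg _), ← abs_mul,
              inv_mul_cancel₀ htne, abs_one, Real.one_rpow]
          linear_combination (r ^ α * ∑ i, |v i| ^ α) * habs
  have h2 : Tendsto (fun t => ∑ i, |slope g 0 t i| ^ α) (𝓝[≠] (0:ℝ))
      (𝓝 (r ^ α * ∑ i, |v i| ^ α)) :=
    Tendsto.congr' (hev.mono fun t ht => ht.symm) tendsto_const_nhds
  exact tendsto_nhds_unique h1 h2

lemma pf8_segment {N : ℕ} {r : ℝ}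
    {Z : Set (Fin N → ℝ)} (hZconv : Convex ℝ Z)
    {h : (Fin N → ℝ) → (Fin N → ℝ)}
    (hdiff : DifferentiableOn ℝ h Z)
    (hfin : ∀ z ∈ interior Z, ∀ (v : Fin N → ℝ) (i : Fin N), (fderiv ℝ h z) v i ∈
      ((Finset.univ.image (fun j => r * v j) ∪ Finset.univ.image (fun j => -(r * v j))) : Finset ℝ))
    {z1 w : Fin N → ℝ} (hz1 : z1 ∈ interior Z) (hw : w ∈ interior Z) :
    ∀ i, h w i = h z1 i + (fderiv ℝ h z1) (w - z1) i := by
  intro i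
  set v : Fin N → ℝ := w - z1 with hv
  have hcont : Continuous fun t : ℝ => z1 + t • v := by continuity
  set I : Set ℝ := (fun t : ℝ => z1 + t • v) ⁻¹' interior Z with hI
  have hIopen : IsOpen I := isOpen_interior.preimage hcont
  have hIconv : Convex ℝ I := by
    intro t1 ht1 t2 ht2 p q hp hq hpq
    show z1 + (p * t1 + q * t2) • v ∈ interior Z
    have heq : z1 + (p * t1 + q * t2) • v = p • (z1 + t1 • v) + q • (z1 + t2 • v) := by
      ext k
      simp only [Pi.add_apply, Pi.smul_apply, smul_eq_mul]
      have hpq1 : p + q = 1 := hpq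
      linear_combination (-z1 k) * hpq1
    rw [heq]
    exact hZconv.interior ht1 ht2 hp hq hpq
  have h0 : (0:ℝ) ∈ I := by
    show z1 + (0:ℝ) • v ∈ interior Z
    simpa using hz1
  have h1 : (1:ℝ) ∈ I := by
    show z1 + (1:ℝ) • v ∈ interior Z
    rw [one_smul, hv, add_sub_cancel]
    exact hw
  obtain ⟨δ0, hδ0, hball0⟩ := Metric.isOpen_iff.mp hIopen 0 h0
  obtain ⟨δ1, hδ1, hball1⟩ := Metric.isOpen_iff.mp hIopen 1 h1
  set δ := min δ0 δ1 with hδ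
  have hδpos : 0 < δ := lt_min hδ0 hδ1
  have hIoo : Set.Ioo (-(δ/2)) (1 + δ/2) ⊆ I := by
    intro t ht
    rcases le_or_gt t 0 with hc | hc
    · apply hball0
      rw [Metric.mem_ball, Real.dist_eq, sub_zero, abs_of_nonpos hc]
      have : -t < δ/2 := by linarith [ht.1]
      have : δ/2 < δ0 := by
        have := min_le_left δ0 δ1; linarith
      linarith [ht.1]
    rcases le_or_gt 1 t with hc' | hc'
    · apply hball1
      rw [Metric.mem_ball, Real.dist_eq, abs_of_nonneg (by linarith)]
      have : δ/2 < δ1 := by have := min_le_right δ0 δ1; linarith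
      linarith [ht.2]
    · have : t ∈ segment ℝ (0:ℝ) 1 := by
        rw [segment_eq_Icc (by norm_num : (0:ℝ) ≤ 1)]
        exact ⟨hc.le, hc'.le⟩
      exact hIconv.segment_subset h0 h1 this
  set ψ : ℝ → ℝ := fun t => h (z1 + t • v) i with hψ
  set f' : ℝ → ℝ := fun t => (fderiv ℝ h (z1 + t • v)) v i with hf'
  have hψd : ∀ t ∈ Set.Ioo (-(δ/2)) (1 + δ/2), HasDerivAt ψ (f' t) t := by
    intro t ht
    have hmem : z1 + t • v ∈ interior Z := hIoo ht
    have hdz : DifferentiableAt ℝ h (z1 + t • v) :=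
      hdiff.differentiableAt (mem_interior_iff_mem_nhds.mp hmem)
    have hγ : HasDerivAt (fun u : ℝ => z1 + u • v) v t := by
      simpa using ((hasDerivAt_id t).smul_const v).const_add z1
    have hcomp : HasDerivAt (fun u => h (z1 + u • v)) ((fderiv ℝ h (z1 + t • v)) v) t :=
      hdz.hasFDerivAt.comp_hasDerivAt t hγ
    have := (ContinuousLinearMap.proj (R := ℝ) (φ := fun _ : Fin N => ℝ) i).hasFDerivAt.comp_hasDerivAt t hcomp
    exact this
  have hS : ∀ t ∈ Set.Ioo (-(δ/2)) (1 + δ/2), f' t ∈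
      ((Finset.univ.image (fun j => r * v j) ∪ Finset.univ.image (fun j => -(r * v j))) : Finset ℝ) :=
    fun t ht => hfin _ (hIoo ht) v i
  have h0mem : (0:ℝ) ∈ Set.Ioo (-(δ/2)) (1 + δ/2) := by constructor <;> [linarith; linarith]
  have hconst : ∀ t ∈ Set.Ioo (-(δ/2)) (1 + δ/2), f' t = f' 0 :=
    fun t ht => pf8_darboux_const _ hψd hS ht h0mem
  have hMVT := exists_hasDerivAt_eq_slope ψ f' (by norm_num : (0:ℝ) < 1)
    (fun t ht => by
      have hsub : t ∈ Set.Ioo (-(δ/2)) (1 + δ/2) :=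
        ⟨by linarith [ht.1, hδpos], by linarith [ht.2, hδpos]⟩
      exact (hψd t hsub).continuousAt.continuousWithinAt)
    (fun t ht => hψd t ⟨by linarith [ht.1, hδpos], by linarith [ht.2, hδpos]⟩)
  obtain ⟨ξ, hξ, hξeq⟩ := hMVT
  have hξ' : ξ ∈ Set.Ioo (-(δ/2)) (1 + δ/2) :=
    ⟨by linarith [hξ.1, hδpos], by linarith [hξ.2, hδpos]⟩
  have : f' 0 = ψ 1 - ψ 0 := by
    rw [← hconst ξ hξ', hξeq]; norm_num
  have hψ1 : ψ 1 = h w i := by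
    show h (z1 + (1:ℝ) • v) i = h w i
    rw [one_smul, hv, add_sub_cancel]
  have hψ0 : ψ 0 = h z1 i := by
    show h (z1 + (0:ℝ) • v) i = h z1 i
    norm_num
  have hf'0 : f' 0 = (fderiv ℝ h z1) (w - z1) i := by
    show (fderiv ℝ h (z1 + (0:ℝ) • v)) v i = _
    rw [zero_smul, add_zero]
  rw [hψ1, hψ0, hf'0] at this
  linarith


/-- a differentiable isometry-up-to-rescaling of a convex body in
ℝ^N w.r.t. an L^α metric (α ≥ 1, α ≠ 2) is a rescaled generalized permutation
(permutation, sign flips) possibly followed by a translation. -/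
theorem stmt_8 (N : ℕ) (α : ℝ) (hα : 1 ≤ α) (hα2 : α ≠ 2) (r : ℝ) (hr : 0 < r)
    (Z : Set (Fin N → ℝ)) (hZc : IsCompact Z) (hZconv : Convex ℝ Z)
    (hZint : (interior Z).Nonempty)
    (h : (Fin N → ℝ) → (Fin N → ℝ)) (hmap : Set.MapsTo h Z Z)
    (hdiff : DifferentiableOn ℝ h Z)
    (hiso : ∀ z ∈ Z, ∀ z' ∈ Z,
      (∑ i, |z i - z' i| ^ α) ^ (1 / α)
        = (∑ i, |h z i / r - h z' i / r| ^ α) ^ (1 / α)) :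
    ∃ (σ : Equiv.Perm (Fin N)) (ε : Fin N → ℝ) (b : Fin N → ℝ),
      (∀ i, ε i = 1 ∨ ε i = -1) ∧
      ∀ z ∈ Z, ∀ i, h z i = r * (ε i * z (σ i)) + b i := by
  have hα0 : (0:ℝ) < α := by linarith
  obtain ⟨z0, hz0⟩ := hZint
  -- the scaled sum identity
  have hsum : ∀ z ∈ Z, ∀ z' ∈ Z,
      ∑ i, |h z i - h z' i| ^ α = r ^ α * ∑ i, |z i - z' i| ^ α := by
    intro z hz z' hz'
    have hiso' := hiso z hz z' hz'
    have hA : (0:ℝ) ≤ ∑ i, |z i - z' i| ^ α :=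
      Finset.sum_nonneg fun i _ => Real.rpow_nonneg (abs_nonneg _) α
    have hB : (0:ℝ) ≤ ∑ i, |h z i / r - h z' i / r| ^ α :=
      Finset.sum_nonneg fun i _ => Real.rpow_nonneg (abs_nonneg _) α
    have hAB : ∑ i, |z i - z' i| ^ α = ∑ i, |h z i / r - h z' i / r| ^ α :=
      Real.rpow_left_injOn (x := 1/α) (by positivity) (Set.mem_setOf.2 hA)
        (Set.mem_setOf.2 hB) hiso'
    have hterm : ∀ i : Fin N, |h z i / r - h z' i / r| ^ α = |h z i - h z' i| ^ α / r ^ α := by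
      intro i
      rw [div_sub_div_same, abs_div, abs_of_pos hr, Real.div_rpow (abs_nonneg _) hr.le]
    rw [Finset.sum_congr rfl (fun i _ => hterm i), ← Finset.sum_div] at hAB
    rw [eq_div_iff (ne_of_gt (Real.rpow_pos_of_pos hr α))] at hAB
    linarith [hAB]
  -- derivatives are scaled generalized permutations
  have hgp : ∀ z ∈ interior Z, ∃ (σ : Equiv.Perm (Fin N)) (ε : Fin N → ℝ),
      (∀ i, ε i = 1 ∨ ε i = -1) ∧ ∀ v i, (fderiv ℝ h z) v i = r * (ε i * v (σ i)) := by
    intro z hz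
    set L : (Fin N → ℝ) →ₗ[ℝ] (Fin N → ℝ) :=
      (r⁻¹ • fderiv ℝ h z : (Fin N → ℝ) →L[ℝ] (Fin N → ℝ)).toLinearMap with hLdef
    have hLapp : ∀ v i, L v i = r⁻¹ * (fderiv ℝ h z) v i := by
      intro v i
      simp [hLdef]
    have hL : ∀ v, ∑ i, |L v i| ^ α = ∑ i, |v i| ^ α := by
      intro v
      have hd := pf8_fderiv_isom hα0 hr hdiff hsum hz v
      calc ∑ i, |L v i| ^ α = ∑ i, |r⁻¹| ^ α * |(fderiv ℝ h z) v i| ^ α := by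
            refine Finset.sum_congr rfl fun i _ => ?_
            rw [hLapp, abs_mul, Real.mul_rpow (abs_nonneg _) (abs_nonneg _)]
        _ = |r⁻¹| ^ α * (r ^ α * ∑ i, |v i| ^ α) := by rw [← Finset.mul_sum, hd]
        _ = ∑ i, |v i| ^ α := by
            rw [abs_of_pos (inv_pos.mpr hr), ← mul_assoc,
              ← Real.mul_rpow (inv_pos.mpr hr).le hr.le, inv_mul_cancel₀ hr.ne',
              Real.one_rpow, one_mul]
    obtain ⟨σ, ε, hε, hform⟩ := pf8_linear_gp hα hα2 L hL
    refine ⟨σ, ε, hε, fun v i => ?_⟩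
    calc (fderiv ℝ h z) v i = r * (r⁻¹ * (fderiv ℝ h z) v i) := by field_simp
      _ = r * (ε i * v (σ i)) := by rw [← hLapp, hform]
  -- finite set of possible directional derivatives
  have hfin : ∀ z ∈ interior Z, ∀ (v : Fin N → ℝ) (i : Fin N), (fderiv ℝ h z) v i ∈
      ((Finset.univ.image (fun j => r * v j) ∪
        Finset.univ.image (fun j => -(r * v j))) : Finset ℝ) := by
    intro z hz v i
    obtain ⟨σ, ε, hε, hform⟩ := hgp z hz
    rw [hform]
    rcases hε i with he | he
    · rw [he, one_mul]
      exact Finset.mem_union_left _ (Finset.mem_image.mpr ⟨σ i, Finset.mem_univ _, rfl⟩)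
    · rw [he]
      apply Finset.mem_union_right
      refine Finset.mem_image.mpr ⟨σ i, Finset.mem_univ _, ?_⟩
      ring
  obtain ⟨σ, ε, hε, hform⟩ := hgp z0 hz0
  refine ⟨σ, ε, fun i => h z0 i - r * (ε i * z0 (σ i)), hε, ?_⟩
  have hint : ∀ w ∈ interior Z, ∀ i,
      h w i = r * (ε i * w (σ i)) + (h z0 i - r * (ε i * z0 (σ i))) := by
    intro w hw i
    have hseg := pf8_segment hZconv hdiff hfin hz0 hw i
    rw [hseg, hform]
    have hws : (w - z0) (σ i) = w (σ i) - z0 (σ i) := rfl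
    rw [hws]
    ring
  intro z hz i
  set x : ℕ → (Fin N → ℝ) := fun n => z + (((n:ℝ)+1)⁻¹ : ℝ) • (z0 - z) with hx
  have hxmem : ∀ n, x n ∈ interior Z := by
    intro n
    apply hZconv.add_smul_sub_mem_interior hz hz0
    constructor
    · positivity
    · have h1n : (1:ℝ) ≤ (n:ℝ)+1 := by
        have : (0:ℝ) ≤ (n:ℝ) := Nat.cast_nonneg n
        linarith
      calc (((n:ℝ)+1)⁻¹ : ℝ) ≤ 1⁻¹ := by
            apply inv_anti₀ one_pos h1n
        _ = 1 := by norm_num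
  have hxtend : Filter.Tendsto x Filter.atTop (𝓝 z) := by
    have ht : Filter.Tendsto (fun n : ℕ => (((n:ℝ)+1)⁻¹ : ℝ)) Filter.atTop (𝓝 0) := by
      simpa only [one_div] using tendsto_one_div_add_atTop_nhds_zero_nat (𝕜 := ℝ)
    have := (ht.smul_const (z0 - z)).const_add z
    simpa using this
  have hcw : ContinuousWithinAt h Z z := hdiff.continuousOn.continuousWithinAt hz
  have hxtendZ : Filter.Tendsto x Filter.atTop (𝓝[Z] z) := by
    rw [tendsto_nhdsWithin_iff]
    exact ⟨hxtend, Filter.Eventually.of_forall fun n => interior_subset (hxmem n)⟩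
  have hlim1 : Filter.Tendsto (fun n => h (x n) i) Filter.atTop (𝓝 (h z i)) := by
    have hh : Filter.Tendsto (fun n => h (x n)) Filter.atTop (𝓝 (h z)) := Filter.Tendsto.comp hcw hxtendZ
    exact ((continuous_apply i).tendsto _).comp hh
  have hlim2 : Filter.Tendsto (fun n => h (x n) i) Filter.atTop
      (𝓝 (r * (ε i * z (σ i)) + (h z0 i - r * (ε i * z0 (σ i))))) := by
    have heq : ∀ n, h (x n) i = r * (ε i * (x n) (σ i)) + (h z0 i - r * (ε i * z0 (σ i))) :=
      fun n => hint (x n) (hxmem n) i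
    rw [show (fun n => h (x n) i)
        = fun n => r * (ε i * (x n) (σ i)) + (h z0 i - r * (ε i * z0 (σ i))) from funext heq]
    have hx' : Filter.Tendsto (fun n => (x n) (σ i)) Filter.atTop (𝓝 (z (σ i))) :=
      ((continuous_apply (σ i)).tendsto _).comp hxtend
    exact ((hx'.const_mul (ε i)).const_mul r).add_const _
  exact tendsto_nhds_unique hlim1 hlim2
end

section
/- Let g : Z → X be injective and differentiable, with Z = S^{N-1}, and let f : X → S^{N-1}_{√κ} be differentiable such that h = f ∘ g satisfies κ zᵀz̃ = h(z)ᵀh(z̃) for all z, z̃ ∈ Z and some κ > 0. Then there exists an orthogonal matrix A with f(g(z)) = √κ · Az for all z ∈ Z; in particular f inverts g on its image up to the orthogonal linear transformation √κ A. -/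
open scoped RealInnerProductSpace

/-- if h = f ∘ g preserves the κ-scaled dot product on the unit
sphere, then f ∘ g equals √κ · A for an orthogonal transformation A, i.e. f
inverts g up to an orthogonal linear transformation. -/
theorem stmt_18 (N K : ℕ) (hNK : N ≤ K) (κ : ℝ) (hκ : 0 < κ)
    (g : EuclideanSpace ℝ (Fin N) → EuclideanSpace ℝ (Fin K))
    (hg_inj : ∀ z z' : EuclideanSpace ℝ (Fin N), ‖z‖ = 1 → ‖z'‖ = 1 →
      g z = g z' → z = z')
    (hg_diff : Differentiable ℝ g)
    (f : EuclideanSpace ℝ (Fin K) → EuclideanSpace ℝ (Fin N))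
    (hf_diff : Differentiable ℝ f)
    (hf_sphere : ∀ z : EuclideanSpace ℝ (Fin N), ‖z‖ = 1 →
      ‖f (g z)‖ = Real.sqrt κ)
    (hdot : ∀ z z' : EuclideanSpace ℝ (Fin N), ‖z‖ = 1 → ‖z'‖ = 1 →
      κ * ⟪z, z'⟫ = ⟪f (g z), f (g z')⟫) :
    ∃ A : EuclideanSpace ℝ (Fin N) →ₗᵢ[ℝ] EuclideanSpace ℝ (Fin N),
      ∀ z : EuclideanSpace ℝ (Fin N), ‖z‖ = 1 →
        f (g z) = Real.sqrt κ • A z := by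
  rcases Nat.eq_zero_or_pos N with hN | hN
  · refine ⟨LinearIsometryEquiv.refl ℝ _ |>.toLinearIsometry, ?_⟩
    intro z hz
    exfalso
    subst hN
    have : z = 0 := Subsingleton.elim _ _
    rw [this, norm_zero] at hz
    exact one_ne_zero hz.symm
  have : Nonempty (Fin N) := ⟨⟨0, hN⟩⟩
  have hs : (0:ℝ) < Real.sqrt κ := Real.sqrt_pos.mpr hκ
  have hs0 : Real.sqrt κ ≠ 0 := ne_of_gt hs
  have hmul : Real.sqrt κ * Real.sqrt κ = κ := Real.mul_self_sqrt hκ.le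
  set e : Fin N → EuclideanSpace ℝ (Fin N) := fun i => EuclideanSpace.single i 1 with he
  have hne : ∀ i, ‖e i‖ = 1 := by
    intro i
    simp [he, EuclideanSpace.norm_single]
  have hee : ∀ i j : Fin N, ⟪e i, e j⟫ = if i = j then (1:ℝ) else 0 := by
    intro i j
    simp [he, EuclideanSpace.inner_single_left, EuclideanSpace.single_apply, eq_comm]
  set v : Fin N → EuclideanSpace ℝ (Fin N) :=
    fun i => (Real.sqrt κ)⁻¹ • f (g (e i)) with hv
  have hvv : ∀ i j, ⟪v i, v j⟫ = ⟪e i, e j⟫ := by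
    intro i j
    rw [hv]
    simp only [real_inner_smul_left, real_inner_smul_right]
    rw [← hdot _ _ (hne i) (hne j), ← hmul]
    field_simp
    rw [Real.sqrt_sq hs.le]
  have hon : Orthonormal ℝ v := by
    rw [orthonormal_iff_ite]
    intro i j
    rw [hvv i j, hee i j]
  have hcard : Fintype.card (Fin N) =
      Module.finrank ℝ (EuclideanSpace ℝ (Fin N)) := by
    simp [finrank_euclideanSpace_fin]
  let b : Module.Basis (Fin N) ℝ (EuclideanSpace ℝ (Fin N)) :=
    basisOfLinearIndependentOfCardEqFinrank hon.linearIndependent hcard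
  have hb : ∀ i, b i = v i := by
    intro i
    simp [b, coe_basisOfLinearIndependentOfCardEqFinrank]
  have hon' : Orthonormal ℝ (⇑b) := by
    rw [orthonormal_iff_ite]
    intro i j
    rw [hb i, hb j, hvv i j, hee i j]
  let w : OrthonormalBasis (Fin N) ℝ (EuclideanSpace ℝ (Fin N)) :=
    b.toOrthonormalBasis hon'
  have hw : ∀ i, w i = v i := by
    intro i
    rw [Module.Basis.coe_toOrthonormalBasis, hb i]
  refine ⟨w.repr.symm.toLinearIsometry, ?_⟩
  intro z hz
  have key : w.repr ((Real.sqrt κ)⁻¹ • f (g z)) = z := by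
    ext i
    rw [w.repr_apply_apply, hw i, hv]
    simp only [real_inner_smul_left, real_inner_smul_right]
    rw [← hdot _ _ (hne i) hz]
    have hin : ⟪e i, z⟫ = z i := by
      simp [he, EuclideanSpace.inner_single_left]
    rw [hin, ← hmul]
    field_simp
    rw [Real.sqrt_sq hs.le]
  have heq : (Real.sqrt κ)⁻¹ • f (g z) = w.repr.symm z := by
    refine w.repr.injective ?_
    rw [key, LinearIsometryEquiv.apply_symm_apply]
  rw [LinearIsometryEquiv.coe_toLinearIsometry, ← heq, smul_smul,
    mul_inv_cancel₀ hs0, one_smul]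
end
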